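/- arXiv:1404.6711 — 10 statements merged into one kernel-verified Lean document; each statement's English description precedes it below -/
import Mathlib

section
/- Let R be a commutative noetherian ring, let 𝔞 and 𝔟 be ideals of R with 𝔞 ⊆ 𝔟, and let 𝒮 be a class of R-modules that is closed under taking submodules and satisfies the C_𝔞 condition. If M is an R-module such that (0 :_M 𝔞) ∈ 𝒮, then Γ_𝔟(M) ∈ 𝒮. -/
universe u

open Submodule

variable {R : Type u} [CommRing R]

/-- `Γ_a(M)`, the `a`-torsion submodule of `M`: the set of elements annihilated by
some power of the ideal `a`. -/
def torsionGamma (a : Ideal R) (M : Type u) [AddCommGroup M] [Module R M] :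
    Submodule R M :=
  ⨆ n : ℕ, Submodule.torsionBySet R M ((a ^ n : Ideal R) : Set R)

/-- The class `S` satisfies the condition `C_a` on the module `M`:
if `Γ_a(M) = M` and `(0 :_M a) ∈ S` then `M ∈ S`. -/
def CCondOn (S : ModuleCat.{u} R → Prop) (a : Ideal R) (M : ModuleCat.{u} R) : Prop :=
  torsionGamma a M = ⊤ →
    S (ModuleCat.of R (Submodule.torsionBySet R M (a : Set R))) → S M

/-- The class `S` satisfies the condition `C_a` (on every `R`-module). -/
def CCond (S : ModuleCat.{u} R → Prop) (a : Ideal R) : Prop :=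
  ∀ M : ModuleCat.{u} R, CCondOn S a M

/-- The class `S` is closed under isomorphisms of `R`-modules. -/
def IsoClosed (S : ModuleCat.{u} R → Prop) : Prop :=
  ∀ ⦃M N : ModuleCat.{u} R⦄, (M ≃ₗ[R] N) → S M → S N

/-- `S` is a Serre subcategory of the category of `R`-modules: it is closed under
isomorphisms, contains the zero module, and is closed under submodules, quotient modules
and extensions. -/
structure IsSerreClass (S : ModuleCat.{u} R → Prop) : Prop where
  iso : IsoClosed S
  zero : ∀ M : ModuleCat.{u} R, Subsingleton M → S M
  subobj : ∀ (M : ModuleCat.{u} R) (N : Submodule R M), S M → S (ModuleCat.of R N)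
  quot : ∀ (M : ModuleCat.{u} R) (N : Submodule R M), S M → S (ModuleCat.of R (M ⧸ N))
  extension : ∀ (M : ModuleCat.{u} R) (N : Submodule R M),
    S (ModuleCat.of R N) → S (ModuleCat.of R (M ⧸ N)) → S M

/-- If `S` is closed under submodules and satisfies the `C_a` condition, `a ⊆ b`,
and `(0 :_M a) ∈ S`, then `Γ_b(M) ∈ S`. -/
theorem stmt0 [IsNoetherianRing R] (a b : Ideal R) (hab : a ≤ b)
    (S : ModuleCat.{u} R → Prop)
    (hiso : IsoClosed S)
    (hsub : ∀ (M : ModuleCat.{u} R) (N : Submodule R M), S M → S (ModuleCat.of R N))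
    (hCa : CCond S a)
    (M : ModuleCat.{u} R)
    (hM : S (ModuleCat.of R (Submodule.torsionBySet R M (a : Set R)))) :
    S (ModuleCat.of R (torsionGamma b M)) := by
  classical
  set N : Submodule R M := torsionGamma b M with hN
  set T : Submodule R M := Submodule.torsionBySet R M (a : Set R) with hT
  -- every element of N is killed by some power of a
  have hmem : ∀ x : M, x ∈ N → ∃ n : ℕ, ∀ r ∈ a ^ n, r • x = 0 := by
    intro x hx
    have hdir : Directed (· ≤ ·)
        (fun n : ℕ => Submodule.torsionBySet R M ((b ^ n : Ideal R) : Set R)) := by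
      apply Monotone.directed_le
      intro m n hmn
      exact Submodule.torsionBySet_le_torsionBySet_of_subset
        (Ideal.pow_le_pow_right hmn)
    rw [hN, torsionGamma, Submodule.mem_iSup_of_directed _ hdir] at hx
    obtain ⟨n, hn⟩ := hx
    refine ⟨n, fun r hr => ?_⟩
    have : r ∈ (b ^ n : Ideal R) := Ideal.pow_right_mono hab n hr
    exact (Submodule.mem_torsionBySet_iff _ _).mp hn ⟨r, this⟩
  -- Γ_a(N) = ⊤
  have hGamma : torsionGamma a (ModuleCat.of R N) = ⊤ := by
    show torsionGamma a (↥N) = ⊤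
    rw [eq_top_iff]
    intro (x : ↥N) _
    obtain ⟨n, hn⟩ := hmem (x : M) x.2
    apply Submodule.mem_iSup_of_mem n
    rw [Submodule.mem_torsionBySet_iff]
    rintro ⟨r, hr⟩
    exact Subtype.ext (hn r hr)
  -- (0 :_N a) as a submodule of T
  have hTN : (T ⊓ N).comap N.subtype
      = Submodule.torsionBySet R (↥N) (a : Set R) := by
    ext x
    simp only [Submodule.mem_comap, Submodule.mem_inf, Submodule.subtype_apply,
      Submodule.mem_torsionBySet_iff]
    constructor
    · rintro ⟨hxT, -⟩ ⟨r, hr⟩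
      exact Subtype.ext ((Submodule.mem_torsionBySet_iff _ _).mp hxT ⟨r, hr⟩)
    · intro h
      refine ⟨(Submodule.mem_torsionBySet_iff _ _).mpr fun ⟨r, hr⟩ => ?_, x.2⟩
      exact congrArg Subtype.val (h ⟨r, hr⟩)
  have hle : (T ⊓ N).comap T.subtype ≤ ⊤ := le_top
  -- equivalences
  have e1 : (↥((T ⊓ N).comap T.subtype)) ≃ₗ[R] ↥(T ⊓ N) :=
    Submodule.comapSubtypeEquivOfLe inf_le_left
  have e2 : (↥((T ⊓ N).comap N.subtype)) ≃ₗ[R] ↥(T ⊓ N) :=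
    Submodule.comapSubtypeEquivOfLe inf_le_right
  have e3 : (↥((T ⊓ N).comap N.subtype))
      ≃ₗ[R] ↥(Submodule.torsionBySet R (↥N) (a : Set R)) :=
    LinearEquiv.ofEq _ _ hTN
  have hS0 : S (ModuleCat.of R ((T ⊓ N).comap T.subtype)) :=
    hsub (ModuleCat.of R T) ((T ⊓ N).comap T.subtype) hM
  have hS1 : S (ModuleCat.of R (Submodule.torsionBySet R (↥N) (a : Set R))) :=
    hiso (e1.trans (e2.symm.trans e3)) hS0
  exact hCa (ModuleCat.of R N) hGamma hS1
end

section
/- Let R be a commutative noetherian ring, let 𝔞 be an ideal of R, and let 𝒮 be a class of R-modules that is closed under taking submodules. If 𝒮 satisfies the C_√𝔞 condition, where √𝔞 is the radical of 𝔞, then 𝒮 satisfies the C_𝔞 condition. -/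
universe u

open Submodule

variable {R : Type u} [CommRing R]

/-- If `S` is closed under submodules and satisfies the `C_√a` condition,
then `S` satisfies the `C_a` condition. -/
theorem stmt1 [IsNoetherianRing R] (a : Ideal R)
    (S : ModuleCat.{u} R → Prop)
    (hiso : IsoClosed S)
    (hsub : ∀ (M : ModuleCat.{u} R) (N : Submodule R M), S M → S (ModuleCat.of R N))
    (hrad : CCond S a.radical) :
    CCond S a := by
  intro M hG hS
  obtain ⟨k, hk⟩ := Ideal.exists_radical_pow_le_of_fg a (IsNoetherian.noetherian a.radical)
  apply hrad M
  · rw [eq_top_iff] at hG ⊢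
    refine le_trans hG ?_
    refine iSup_le fun n => le_trans ?_ (le_iSup _ (k * n))
    intro x hx
    rw [Submodule.mem_torsionBySet_iff] at hx ⊢
    rintro ⟨r, hr⟩
    have hpow : a.radical ^ (k * n) ≤ a ^ n := by
      rw [pow_mul]
      exact pow_le_pow_left' hk n
    exact hx ⟨r, hpow hr⟩
  · have hle : Submodule.torsionBySet R M (a.radical : Set R) ≤
        Submodule.torsionBySet R M (a : Set R) := by
      intro x hx
      rw [Submodule.mem_torsionBySet_iff] at hx ⊢
      rintro ⟨r, hr⟩
      exact hx ⟨r, Ideal.le_radical hr⟩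
    exact hiso (Submodule.comapSubtypeEquivOfLe hle) (hsub _ _ hS)
end

section
/- Let R be a commutative noetherian ring, let 𝔞 be an ideal of R, and let 𝒮 be a Serre subcategory of R-modules. If 𝒮 satisfies the C_𝔞 condition, then 𝒮 satisfies the C_√𝔞 condition, where √𝔞 is the radical of 𝔞. -/
universe u

open Submodule

variable {R : Type u} [CommRing R]

/-- A Serre class is closed under passing to smaller submodules. -/
lemma serre_of_le {S : ModuleCat.{u} R → Prop} (hS : IsSerreClass S)
    {M : Type u} [AddCommGroup M] [Module R M] {p q : Submodule R M} (h : p ≤ q)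
    (hq : S (ModuleCat.of R q)) : S (ModuleCat.of R p) :=
  hS.iso (Submodule.comapSubtypeEquivOfLe h)
    (hS.subobj (ModuleCat.of R q) (Submodule.comap q.subtype p) hq)

/-- Key dévissage lemma: if each generator `x` in the list `l` multiplies `A` into a
submodule `B` belonging to `S`, and the part of `A` killed by all elements of `l`
belongs to `S`, then `A` belongs to `S`. -/
lemma serre_list {S : ModuleCat.{u} R → Prop} (hS : IsSerreClass S)
    {M : Type u} [AddCommGroup M] [Module R M] (B : Submodule R M)
    (hB : S (ModuleCat.of R B)) :
    ∀ (l : List R) (A : Submodule R M),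
      (∀ x ∈ l, ∀ m ∈ A, x • m ∈ B) →
      S (ModuleCat.of R ((A ⊓ Submodule.torsionBySet R M {x | x ∈ l} : Submodule R M))) →
      S (ModuleCat.of R A) := by
  intro l
  induction l with
  | nil =>
    intro A _ hA
    have he : A ⊓ Submodule.torsionBySet R M {x | x ∈ ([] : List R)} = A := by
      rw [inf_eq_left]
      intro m _
      rw [Submodule.mem_torsionBySet_iff]
      rintro ⟨y, hy⟩
      simp at hy
    rwa [he] at hA
  | cons x l ih =>
    intro A hmul hA
    set A' : Submodule R M := A ⊓ Submodule.torsionBySet R M {y | y ∈ l} ⊓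
      Submodule.torsionBySet R M {x} with hA'def
    have hA'eq : A' = A ⊓ Submodule.torsionBySet R M {y | y ∈ x :: l} := by
      ext m
      simp only [hA'def, Submodule.mem_inf, Submodule.mem_torsionBySet_iff]
      constructor
      · rintro ⟨⟨hmA, hl⟩, hx⟩
        refine ⟨hmA, ?_⟩
        rintro ⟨y, hy⟩
        rcases List.mem_cons.mp hy with h | h
        · subst h; exact hx ⟨y, rfl⟩
        · exact hl ⟨y, h⟩
      · rintro ⟨hmA, h⟩
        exact ⟨⟨hmA, fun ⟨y, hy⟩ => h ⟨y, List.mem_cons_of_mem _ hy⟩⟩,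
          fun ⟨y, hy⟩ => by rcases hy with rfl; exact h ⟨y, List.mem_cons_self⟩⟩
    -- the submodule of elements of `A` killed by `x`
    set A₁ : Submodule R M := A ⊓ Submodule.torsionBySet R M {x} with hA₁def
    have hA₁S : S (ModuleCat.of R A₁) := by
      apply ih A₁
      · intro y hy m hm
        exact hmul y (List.mem_cons_of_mem _ hy) m hm.1
      · have : A₁ ⊓ Submodule.torsionBySet R M {y | y ∈ l} = A' := by
          rw [hA₁def, hA'def]
          ext m
          simp only [Submodule.mem_inf]
          tauto
        rw [this, hA'eq]
        exact hA
    -- multiplication by `x` on `A`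
    set f : A →ₗ[R] M := x • A.subtype with hfdef
    have hker : LinearMap.ker f = Submodule.comap A.subtype A₁ := by
      ext m
      simp only [LinearMap.mem_ker, Submodule.mem_comap, hA₁def, Submodule.mem_inf,
        hfdef, LinearMap.smul_apply, Submodule.coe_subtype]
      constructor
      · intro h
        refine ⟨m.2, ?_⟩
        rw [Submodule.mem_torsionBySet_iff]
        rintro ⟨y, hy⟩
        rcases hy with rfl
        exact h
      · rintro ⟨-, h⟩
        rw [Submodule.mem_torsionBySet_iff] at h
        exact h ⟨x, rfl⟩
    have hrange : LinearMap.range f ≤ B := by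
      rintro - ⟨m, rfl⟩
      exact hmul x (List.mem_cons_self) m m.2
    have hkerS : S (ModuleCat.of R (LinearMap.ker f)) := by
      rw [hker]
      exact hS.iso (Submodule.comapSubtypeEquivOfLe (inf_le_left : A₁ ≤ A)).symm hA₁S
    have hquotS : S (ModuleCat.of R (A ⧸ LinearMap.ker f)) := by
      have hrS : S (ModuleCat.of R (LinearMap.range f)) := serre_of_le hS hrange hB
      exact hS.iso (f.quotKerEquivRange).symm hrS
    exact hS.extension (ModuleCat.of R A) (LinearMap.ker f) hkerS hquotS

/-- If `(0 :_M b) ∈ S` for a finitely generated ideal `b`, then `(0 :_M b^j) ∈ S`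
for every `j`. -/
lemma serre_pow {S : ModuleCat.{u} R → Prop} (hS : IsSerreClass S)
    {M : Type u} [AddCommGroup M] [Module R M] (b : Ideal R) (hb : b.FG)
    (h1 : S (ModuleCat.of R (Submodule.torsionBySet R M (b : Set R)))) :
    ∀ j : ℕ, S (ModuleCat.of R (Submodule.torsionBySet R M ((b ^ j : Ideal R) : Set R))) := by
  intro j
  induction j with
  | zero =>
    apply hS.zero
    constructor
    rintro ⟨m, hm⟩ ⟨m', hm'⟩
    rw [Submodule.mem_torsionBySet_iff] at hm hm'
    have h1m : (1 : R) • m = 0 := hm ⟨1, by simp [Ideal.one_eq_top]⟩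
    have h1m' : (1 : R) • m' = 0 := hm' ⟨1, by simp [Ideal.one_eq_top]⟩
    apply Subtype.ext
    simp only [one_smul] at h1m h1m'
    simp [h1m, h1m']
  | succ j ih =>
    obtain ⟨s, hs⟩ := hb
    apply serre_list hS _ ih s.toList
    · intro x hx m hm
      rw [Submodule.mem_torsionBySet_iff] at hm ⊢
      rintro ⟨y, hy⟩
      have hxb : x ∈ b := by
        rw [← hs]; exact Submodule.subset_span ((Finset.mem_toList).mp hx)
      have : y * x ∈ b ^ (j + 1) := by
        rw [pow_succ]
        exact Ideal.mul_mem_mul hy hxb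
      have := hm ⟨y * x, this⟩
      simpa [mul_smul] using this
    · have heq : Submodule.torsionBySet R M ((b ^ (j + 1) : Ideal R) : Set R) ⊓
          Submodule.torsionBySet R M {x | x ∈ s.toList} =
          Submodule.torsionBySet R M (b : Set R) := by
        have h2 : Submodule.torsionBySet R M {x | x ∈ s.toList} =
            Submodule.torsionBySet R M (b : Set R) := by
          have hset : {x | x ∈ s.toList} = (↑s : Set R) := by
            ext x; simp
          rw [hset, Submodule.torsionBySet_eq_torsionBySet_span, hs]
        rw [h2, inf_eq_right]
        apply Submodule.torsionBySet_le_torsionBySet_of_subset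
        exact Ideal.pow_le_self (Nat.succ_ne_zero j)
      rw [heq]
      exact h1

/-- If a Serre subcategory `S` satisfies the `C_a` condition, then it satisfies
the `C_√a` condition. -/
theorem stmt2 [IsNoetherianRing R] (a : Ideal R)
    (S : ModuleCat.{u} R → Prop)
    (hS : IsSerreClass S)
    (hCa : CCond S a) :
    CCond S a.radical := by
  intro M hΓ hs
  obtain ⟨k, hk⟩ := Ideal.exists_radical_pow_le_of_fg a (IsNoetherian.noetherian _)
  have hbfg : a.radical.FG := IsNoetherian.noetherian _
  have hpow := serre_pow hS a.radical hbfg hs k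
  have hle : Submodule.torsionBySet R M (a : Set R) ≤
      Submodule.torsionBySet R M ((a.radical ^ k : Ideal R) : Set R) :=
    Submodule.torsionBySet_le_torsionBySet_of_subset hk
  refine hCa M ?_ (serre_of_le hS hle hpow)
  rw [eq_top_iff, ← hΓ]
  refine iSup_le fun n => le_iSup_of_le n ?_
  exact Submodule.torsionBySet_le_torsionBySet_of_subset
    (Ideal.pow_right_mono Ideal.le_radical n)
end

section
/- Let R be a commutative noetherian ring, let 𝔞 and 𝔟 be ideals of R, and let 𝒮 be a class of R-modules satisfying the C_𝔞 and C_𝔟 conditions. Then 𝒮 satisfies the C_{𝔞+𝔟} condition. -/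
universe u

open Submodule

variable {R : Type u} [CommRing R]

lemma mem_torsionGamma_iff (c : Ideal R) {M : Type u} [AddCommGroup M] [Module R M] (x : M) :
    x ∈ torsionGamma c M ↔ ∃ n : ℕ, ∀ r ∈ c ^ n, r • x = 0 := by
  rw [torsionGamma, Submodule.mem_iSup_of_directed]
  · constructor
    · rintro ⟨n, hn⟩
      exact ⟨n, fun r hr => (Submodule.mem_torsionBySet_iff _ _).mp hn ⟨r, hr⟩⟩
    · rintro ⟨n, hn⟩
      exact ⟨n, (Submodule.mem_torsionBySet_iff _ _).mpr fun r => hn r r.2⟩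
  · intro m n
    refine ⟨m + n, ?_, ?_⟩ <;>
      exact Submodule.torsionBySet_le_torsionBySet_of_subset
        (Ideal.pow_le_pow_right (by omega))

lemma torsionGamma_eq_top_of_le {c d : Ideal R} {M : Type u} [AddCommGroup M] [Module R M]
    (h : c ≤ d) (hd : torsionGamma d M = ⊤) : torsionGamma c M = ⊤ := by
  rw [eq_top_iff] at hd ⊢
  refine fun x hx => ?_
  obtain ⟨n, hn⟩ := (mem_torsionGamma_iff d x).mp (hd hx)
  exact (mem_torsionGamma_iff c x).mpr ⟨n, fun r hr => hn r (Ideal.pow_right_mono h n hr)⟩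


/-- If a class `S` satisfies the `C_a` and `C_b` conditions,
then it satisfies the `C_{a+b}` condition. -/
theorem stmt3 [IsNoetherianRing R] (a b : Ideal R)
    (S : ModuleCat.{u} R → Prop)
    (hiso : IsoClosed S)
    (hCa : CCond S a) (hCb : CCond S b) :
    CCond S (a + b) := by
  intro M hGamma hS
  have hle_a : a ≤ a + b := le_sup_left
  have hle_b : b ≤ a + b := le_sup_right
  -- K = (0 :_M b)
  set K : Submodule R M := Submodule.torsionBySet R M (b : Set R) with hKdef
  -- Γ_a(K) = ⊤
  have hGammaK : torsionGamma a (ModuleCat.of R K) = ⊤ := by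
    rw [eq_top_iff]
    rintro ⟨x, hxK⟩ -
    have hx : (x : M) ∈ torsionGamma a M := by
      rw [torsionGamma_eq_top_of_le hle_a hGamma]; trivial
    obtain ⟨n, hn⟩ := (mem_torsionGamma_iff a x).mp hx
    exact (mem_torsionGamma_iff a _).mpr ⟨n, fun r hr => Subtype.ext (hn r hr)⟩
  -- (0 :_K a) ≃ (0 :_M (a+b))
  have hmem1 : ∀ x : M, x ∈ Submodule.torsionBySet R M ((a + b : Ideal R) : Set R) → x ∈ K :=
    fun x hx => (Submodule.mem_torsionBySet_iff _ _).mpr fun r =>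
      (Submodule.mem_torsionBySet_iff _ _).mp hx ⟨r, hle_b r.2⟩
  have hmem2 : ∀ (x : M) (hx : x ∈ Submodule.torsionBySet R M ((a + b : Ideal R) : Set R)),
      (⟨x, hmem1 x hx⟩ : K) ∈ Submodule.torsionBySet R (↥K) ((a : Ideal R) : Set R) :=
    fun x hx => (Submodule.mem_torsionBySet_iff _ _).mpr fun r =>
      Subtype.ext ((Submodule.mem_torsionBySet_iff _ _).mp hx ⟨r, hle_a r.2⟩)
  let f : (Submodule.torsionBySet R M ((a + b : Ideal R) : Set R)) →ₗ[R]
      (Submodule.torsionBySet R (↥K) ((a : Ideal R) : Set R)) :=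
    { toFun := fun x => ⟨⟨x.1, hmem1 x.1 x.2⟩, hmem2 x.1 x.2⟩
      map_add' := fun x y => rfl
      map_smul' := fun r x => rfl }
  have hbij : Function.Bijective f := by
    constructor
    · intro x y h
      exact Subtype.ext (congrArg (fun z => ((z.1 : K) : M)) h)
    · rintro ⟨⟨x, hxK⟩, hxa⟩
      have hxab : x ∈ Submodule.torsionBySet R M ((a + b : Ideal R) : Set R) := by
        refine (Submodule.mem_torsionBySet_iff _ _).mpr ?_
        rintro ⟨r, hr⟩
        show r • x = 0
        have hr' : r ∈ a + b := hr
        rw [Submodule.add_eq_sup, Submodule.mem_sup] at hr'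
        obtain ⟨ra, hra, rb, hrb, rfl⟩ := hr' 
        have h1 : ra • x = 0 :=
          congrArg (fun z => ((z : K) : M))
            ((Submodule.mem_torsionBySet_iff _ _).mp hxa ⟨ra, hra⟩)
        have h2 : rb • x = 0 := (Submodule.mem_torsionBySet_iff _ _).mp hxK ⟨rb, hrb⟩
        simp [add_smul, h1, h2]
      exact ⟨⟨x, hxab⟩, rfl⟩
  have e : (ModuleCat.of R (Submodule.torsionBySet R M ((a + b : Ideal R) : Set R))) ≃ₗ[R]
      (ModuleCat.of R (Submodule.torsionBySet R (ModuleCat.of R K) (a : Set R))) :=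
    LinearEquiv.ofBijective f hbij
  have hSK : S (ModuleCat.of R K) := hCa (ModuleCat.of R K) hGammaK (hiso e hS)
  exact hCb M (torsionGamma_eq_top_of_le hle_b hGamma) hSK
end

section
/- Let R be a commutative noetherian ring, let 𝔞 and 𝔟 be ideals of R, and let 𝒮 be a Serre subcategory of R-modules. Then 𝒮 satisfies both the C_𝔞 and C_𝔟 conditions if and only if 𝒮 satisfies both the C_{𝔞+𝔟} and C_{𝔞∩𝔟} conditions. -/
universe u

open Submodule

variable {R : Type u} [CommRing R]

namespace Stmt6Aux

variable {S : ModuleCat.{u} R → Prop}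

lemma s_iso (hS : IsSerreClass S) {A B : Type u} [AddCommGroup A] [Module R A]
    [AddCommGroup B] [Module R B] (e : A ≃ₗ[R] B) (h : S (ModuleCat.of R A)) :
    S (ModuleCat.of R B) :=
  hS.iso (M := ModuleCat.of R A) (N := ModuleCat.of R B) e h

lemma s_inj (hS : IsSerreClass S) {A B : Type u} [AddCommGroup A] [Module R A]
    [AddCommGroup B] [Module R B] (f : A →ₗ[R] B) (hf : Function.Injective f)
    (h : S (ModuleCat.of R B)) : S (ModuleCat.of R A) :=
  s_iso hS (LinearEquiv.ofInjective f hf).symm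
    (hS.subobj (ModuleCat.of R B) (LinearMap.range f) h)

lemma s_surj (hS : IsSerreClass S) {A B : Type u} [AddCommGroup A] [Module R A]
    [AddCommGroup B] [Module R B] (f : A →ₗ[R] B) (hf : Function.Surjective f)
    (h : S (ModuleCat.of R A)) : S (ModuleCat.of R B) :=
  s_iso hS (f.quotKerEquivOfSurjective hf)
    (hS.quot (ModuleCat.of R A) (LinearMap.ker f) h)

lemma s_sub (hS : IsSerreClass S) {A : Type u} [AddCommGroup A] [Module R A]
    {p q : Submodule R A} (hpq : p ≤ q) (h : S (ModuleCat.of R q)) :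
    S (ModuleCat.of R p) :=
  s_inj hS (Submodule.inclusion hpq) (Submodule.inclusion_injective hpq) h

lemma s_map (hS : IsSerreClass S) {A B : Type u} [AddCommGroup A] [Module R A]
    [AddCommGroup B] [Module R B] (f : A →ₗ[R] B) (p : Submodule R A)
    (h : S (ModuleCat.of R p)) : S (ModuleCat.of R (p.map f)) := by
  have h1 : S (ModuleCat.of R (LinearMap.range (f ∘ₗ p.subtype))) :=
    s_surj hS ((f ∘ₗ p.subtype).rangeRestrict) (LinearMap.surjective_rangeRestrict _) h
  refine s_iso hS (LinearEquiv.ofEq _ _ ?_) h1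
  rw [LinearMap.range_comp, Submodule.range_subtype]

lemma s_ext (hS : IsSerreClass S) {A : Type u} [AddCommGroup A] [Module R A]
    (p : Submodule R A) (h1 : S (ModuleCat.of R p)) (h2 : S (ModuleCat.of R (A ⧸ p))) :
    S (ModuleCat.of R A) :=
  hS.extension (ModuleCat.of R A) p h1 h2

lemma s_comap_mkq (hS : IsSerreClass S) {A : Type u} [AddCommGroup A] [Module R A]
    (p : Submodule R A) (q : Submodule R (A ⧸ p))
    (h1 : S (ModuleCat.of R p)) (h2 : S (ModuleCat.of R q)) :
    S (ModuleCat.of R (q.comap p.mkQ)) := by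
  have hpZ : p ≤ q.comap p.mkQ := by
    intro x hx
    simp only [mem_comap, mkQ_apply]
    rw [(Submodule.Quotient.mk_eq_zero p).mpr hx]
    exact q.zero_mem
  let ψ : (q.comap p.mkQ) →ₗ[R] q :=
    LinearMap.codRestrict q (p.mkQ ∘ₗ (q.comap p.mkQ).subtype) (fun z => z.2)
  have hker : LinearMap.ker ψ = comap (q.comap p.mkQ).subtype p := by
    ext z
    simp only [LinearMap.mem_ker, mem_comap, Submodule.coe_subtype]
    rw [Subtype.ext_iff]
    show (p.mkQ (z : A) = 0) ↔ _
    rw [mkQ_apply, Submodule.Quotient.mk_eq_zero]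
  have hsurj : Function.Surjective ψ := by
    rintro ⟨y, hy⟩
    obtain ⟨x, rfl⟩ := Submodule.Quotient.mk_surjective p y
    exact ⟨⟨x, hy⟩, Subtype.ext rfl⟩
  refine s_ext hS (LinearMap.ker ψ) ?_ ?_
  · rw [hker]
    exact s_iso hS (comapSubtypeEquivOfLe hpZ).symm h1
  · exact s_iso hS (ψ.quotKerEquivOfSurjective hsurj).symm h2

lemma mem_tBs {X : Type u} [AddCommGroup X] [Module R X] {s : Set R} {x : X} :
    x ∈ torsionBySet R X s ↔ ∀ r ∈ s, r • x = 0 := by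
  rw [mem_torsionBySet_iff]
  exact ⟨fun h r hr => h ⟨r, hr⟩, fun h r => h r.1 r.2⟩

lemma mem_tBI {X : Type u} [AddCommGroup X] [Module R X] {c : Ideal R} {x : X} :
    x ∈ torsionBySet R X (c : Set R) ↔ ∀ r ∈ c, r • x = 0 :=
  mem_tBs

lemma mem_gamma {X : Type u} [AddCommGroup X] [Module R X] {c : Ideal R} {x : X} :
    x ∈ torsionGamma c X ↔ ∃ n : ℕ, ∀ r ∈ (c ^ n : Ideal R), r • x = 0 := by
  constructor
  · intro hx
    refine Submodule.iSup_induction (motive := fun y => ∃ n : ℕ, ∀ r ∈ (c ^ n : Ideal R), r • y = 0)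
      _ hx (fun n y hy => ⟨n, fun r hr => mem_tBI.mp hy r hr⟩) ⟨0, fun r _ => smul_zero r⟩ ?_
    rintro y z ⟨n, hn⟩ ⟨m, hm⟩
    refine ⟨n + m, fun r hr => ?_⟩
    rw [smul_add, hn r (Ideal.pow_le_pow_right (Nat.le_add_right n m) hr),
        hm r (Ideal.pow_le_pow_right (Nat.le_add_left m n) hr), add_zero]
  · rintro ⟨n, hn⟩
    exact (le_iSup (fun n : ℕ => torsionBySet R X ((c ^ n : Ideal R) : Set R)) n)
      (mem_tBI.mpr hn)

lemma gamma_top {X : Type u} [AddCommGroup X] [Module R X] {c : Ideal R} :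
    torsionGamma c X = ⊤ ↔ ∀ x : X, ∃ n : ℕ, ∀ r ∈ (c ^ n : Ideal R), r • x = 0 :=
  ⟨fun h x => mem_gamma.mp (h ▸ mem_top (x := x)),
   fun h => eq_top_iff.mpr fun x _ => mem_gamma.mpr (h x)⟩

lemma s_socle_sub (hS : IsSerreClass S) {X : Type u} [AddCommGroup X] [Module R X]
    (p : Submodule R X) (d : Ideal R) (q : Submodule R X) (hq : S (ModuleCat.of R q))
    (hle : ∀ x : X, x ∈ p → (∀ r ∈ d, r • x = 0) → x ∈ q) :
    S (ModuleCat.of R (torsionBySet R p (d : Set R))) := by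
  refine s_inj hS ?_ ?_ hq
  · exact
      { toFun := fun x => ⟨((x : p) : X), hle _ (x : p).2
          (fun r hr => congrArg Subtype.val (mem_tBI.mp x.2 r hr))⟩
        map_add' := fun _ _ => rfl
        map_smul' := fun _ _ => rfl }
  · intro x y h
    have h2 := congrArg Subtype.val h
    exact Subtype.ext (Subtype.ext h2)

lemma sq_kill {X : Type u} [AddCommGroup X] [Module R X] {a : Ideal R} {x : X}
    (h : ∀ r ∈ a, ∀ s ∈ a, (r * s) • x = 0) : ∀ u ∈ (a ^ 2 : Ideal R), u • x = 0 := by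
  intro u hu
  have hker : a * a ≤ LinearMap.ker (LinearMap.toSpanSingleton R X x) := by
    rw [Ideal.mul_le]
    intro r hr s hs
    rw [LinearMap.mem_ker]
    show (r * s) • x = 0
    exact h r hr s hs
  have hu' : u ∈ LinearMap.ker (LinearMap.toSpanSingleton R X x) := hker (by rwa [← pow_two])
  rw [LinearMap.mem_ker] at hu'
  exact hu'

lemma uniform {X : Type u} [AddCommGroup X] [Module R X] (d : Ideal R) (t : Finset R) {x : X}
    (h : ∀ g ∈ t, ∃ m : ℕ, ∀ s ∈ (d ^ m : Ideal R), s • g • x = 0) :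
    ∃ m : ℕ, ∀ s ∈ (d ^ m : Ideal R), ∀ r ∈ Submodule.span R (↑t : Set R), s • r • x = 0 := by
  have h' : ∀ g : R, ∃ m : ℕ, g ∈ t → ∀ s ∈ (d ^ m : Ideal R), s • g • x = 0 := by
    intro g
    by_cases hg : g ∈ t
    · obtain ⟨m, hm⟩ := h g hg
      exact ⟨m, fun _ => hm⟩
    · exact ⟨0, fun hg' => absurd hg' hg⟩
  choose f hf using h'
  refine ⟨t.sup f, fun s hs r hr => ?_⟩
  induction hr using Submodule.span_induction with
  | mem g hg =>
      have hgt : g ∈ t := by simpa using hg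
      exact hf g hgt s (Ideal.pow_le_pow_right (Finset.le_sup hgt) hs)
  | zero => rw [zero_smul, smul_zero]
  | add r1 r2 _ _ ih1 ih2 => rw [add_smul, smul_add, ih1, ih2, add_zero]
  | smul c r _ ih =>
      rw [smul_eq_mul, mul_smul, smul_smul, mul_comm, ← smul_smul, ih, smul_zero]

lemma peel (hS : IsSerreClass S) {X : Type u} [AddCommGroup X] [Module R X] :
    ∀ l : List R,
      (∀ g ∈ l, ∃ W : Submodule R X, S (ModuleCat.of R W) ∧ ∀ x : X, g • x ∈ W) →
      S (ModuleCat.of R (torsionBySet R X {g | g ∈ l})) → S (ModuleCat.of R X)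
  | [], _, h0 => by
      have htop : torsionBySet R X {g : R | g ∈ ([] : List R)} = ⊤ := by
        rw [eq_top_iff]
        intro x _
        rw [mem_tBs]
        intro r hr
        simp at hr
      rw [htop] at h0
      exact s_iso hS Submodule.topEquiv h0
  | g :: l, hW, h0 => by
      obtain ⟨W, hWS, hgW⟩ := hW g (List.mem_cons_self)
      have hle : torsionBySet R X {h | h ∈ g :: l} ≤ torsionBySet R X {h | h ∈ l} :=
        torsionBySet_le_torsionBySet_of_subset (fun r hr => List.mem_cons_of_mem _ hr)
      let φ : (torsionBySet R X {h | h ∈ l}) →ₗ[R] W :=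
        { toFun := fun x => ⟨g • (x : X), hgW x⟩
          map_add' := by
            intro x y
            apply Subtype.ext
            show g • ((x : X) + (y : X)) = g • (x : X) + g • (y : X)
            rw [smul_add]
          map_smul' := by
            intro r x
            apply Subtype.ext
            show g • (r • (x : X)) = r • (g • (x : X))
            rw [smul_smul, mul_comm, ← smul_smul] }
      have hker : LinearMap.ker φ
          = comap (torsionBySet R X {h | h ∈ l}).subtype (torsionBySet R X {h | h ∈ g :: l}) := by
        ext x
        simp only [LinearMap.mem_ker, mem_comap, Submodule.coe_subtype]
        constructor
        · intro hx
          rw [mem_tBs]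
          intro r hr
          rcases List.mem_cons.mp hr with rfl | hr'
          · exact congrArg Subtype.val hx
          · exact mem_tBs.mp x.2 r hr'
        · intro hx
          apply Subtype.ext
          show g • (x : X) = 0
          exact mem_tBs.mp hx g (List.mem_cons_self)
      have hTS : S (ModuleCat.of R (torsionBySet R X {h | h ∈ l})) := by
        refine s_ext hS (LinearMap.ker φ) ?_ ?_
        · rw [hker]
          exact s_iso hS (comapSubtypeEquivOfLe hle).symm h0
        · have hr : S (ModuleCat.of R (LinearMap.range φ)) :=
            hS.subobj (ModuleCat.of R W) (LinearMap.range φ) hWS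
          exact s_iso hS (φ.quotKerEquivRange).symm hr
      exact peel hS l (fun g' hg' => hW g' (List.mem_cons_of_mem _ hg')) hTS

lemma lemA (hS : IsSerreClass S) [IsNoetherianRing R] (c : Ideal R) :
    ∀ (n : ℕ) (X : Type u) [AddCommGroup X] [Module R X],
      (∀ x : X, ∀ r ∈ (c ^ n : Ideal R), r • x = 0) →
      S (ModuleCat.of R (torsionBySet R X (c : Set R))) → S (ModuleCat.of R X) := by
  intro n
  induction n with
  | zero =>
      intro X _ _ hkill _
      have hsub : Subsingleton X := by
        constructor
        intro x y
        have hx := hkill x 1 (by rw [pow_zero, Ideal.one_eq_top]; exact Submodule.mem_top)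
        have hy := hkill y 1 (by rw [pow_zero, Ideal.one_eq_top]; exact Submodule.mem_top)
        rw [one_smul] at hx hy
        rw [hx, hy]
      exact hS.zero (ModuleCat.of R X) hsub
  | succ n ih =>
      intro X _ _ hkill hsoc
      obtain ⟨t, ht⟩ := IsNoetherian.noetherian c
      refine peel hS t.toList ?_ ?_
      · intro g hg
        have hgc : g ∈ c := by
          rw [← ht]
          exact subset_span (by simpa using hg)
        refine ⟨torsionBySet R X ((c ^ n : Ideal R) : Set R), ?_, ?_⟩
        · refine ih (torsionBySet R X ((c ^ n : Ideal R) : Set R))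
            (fun x r hr => Subtype.ext (mem_tBI.mp x.2 r hr)) ?_
          exact s_socle_sub hS _ c (torsionBySet R X (c : Set R)) hsoc
            (fun x _ h => mem_tBI.mpr h)
        · intro x
          refine mem_tBI.mpr fun r hr => ?_
          rw [smul_smul]
          exact hkill x (r * g) (by rw [pow_succ]; exact Ideal.mul_mem_mul hr hgc)
      · have heq : torsionBySet R X {g | g ∈ t.toList} = torsionBySet R X (c : Set R) := by
          have hset : {g : R | g ∈ t.toList} = (↑t : Set R) := by
            ext g
            simp
          rw [hset, torsionBySet_eq_torsionBySet_span, ← Ideal.submodule_span_eq, ht]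
        rw [heq]
        exact hsoc

lemma mem_add_of_left {a b : Ideal R} {r : R} (hr : r ∈ a) : r ∈ a + b := by
  rw [Submodule.add_eq_sup]
  exact Submodule.mem_sup_left hr

lemma mem_add_of_right {a b : Ideal R} {r : R} (hr : r ∈ b) : r ∈ a + b := by
  rw [Submodule.add_eq_sup]
  exact Submodule.mem_sup_right hr

lemma sum_easy (hS : IsSerreClass S) {a b : Ideal R} (ha : CCond S a) (hb : CCond S b) :
    CCond S (a + b) := by
  intro M hgam hsoc
  have hM : ∀ x : M, ∃ n : ℕ, ∀ r ∈ ((a + b) ^ n : Ideal R), r • x = 0 := gamma_top.mp hgam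
  have hgamN : torsionGamma a (torsionBySet R M (b : Set R)) = ⊤ := by
    refine gamma_top.mpr fun x => ?_
    obtain ⟨n, hn⟩ := hM (x : M)
    refine ⟨n, fun r hr => Subtype.ext ?_⟩
    show r • (x : M) = 0
    exact hn r (Ideal.pow_right_mono (by rw [Submodule.add_eq_sup]; exact le_sup_left) n hr)
  have hsocN : S (ModuleCat.of R (torsionBySet R (torsionBySet R M (b : Set R)) (a : Set R))) := by
    refine s_socle_sub hS _ a (torsionBySet R M (((a + b : Ideal R)) : Set R)) hsoc ?_
    intro x hxN hxa
    refine mem_tBI.mpr fun r hr => ?_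
    rw [Submodule.add_eq_sup] at hr
    obtain ⟨y, hy, z, hz, rfl⟩ := Submodule.mem_sup.mp hr
    rw [add_smul, hxa y hy, mem_tBI.mp hxN z hz, add_zero]
  have hNS : S (ModuleCat.of R (torsionBySet R M (b : Set R))) :=
    ha (ModuleCat.of R (torsionBySet R M (b : Set R))) hgamN hsocN
  refine hb M (gamma_top.mpr fun x => ?_) hNS
  obtain ⟨n, hn⟩ := hM x
  exact ⟨n, fun r hr =>
    hn r (Ideal.pow_right_mono (by rw [Submodule.add_eq_sup]; exact le_sup_right) n hr)⟩

def colonSub {X : Type u} [AddCommGroup X] [Module R X] (N : Submodule R X) (b : Ideal R) :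
    Submodule R X where
  carrier := {x | ∀ s ∈ b, s • x ∈ N}
  add_mem' := fun hx hy s hs => by
    rw [smul_add]
    exact N.add_mem (hx s hs) (hy s hs)
  zero_mem' := fun s hs => by
    rw [smul_zero]
    exact N.zero_mem
  smul_mem' := fun c x hx s hs => by
    rw [smul_smul, mul_comm, ← smul_smul]
    exact N.smul_mem c (hx s hs)

lemma mem_colonSub {X : Type u} [AddCommGroup X] [Module R X] {N : Submodule R X}
    {b : Ideal R} {x : X} : x ∈ colonSub N b ↔ ∀ s ∈ b, s • x ∈ N := Iff.rfl

lemma inf_easy [IsNoetherianRing R] (hS : IsSerreClass S) {a b : Ideal R}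
    (ha : CCond S a) (hb : CCond S b) : CCond S (a ⊓ b) := by
  intro M hgam hsoc
  have hM : ∀ x : M, ∃ n : ℕ, ∀ r ∈ ((a ⊓ b) ^ n : Ideal R), r • x = 0 := gamma_top.mp hgam
  -- N := Γ_a M
  have hNS : S (ModuleCat.of R (torsionGamma a M)) := by
    refine ha (ModuleCat.of R (torsionGamma a M)) (gamma_top.mpr fun x => ?_) ?_
    · obtain ⟨n, hn⟩ := mem_gamma.mp x.2
      exact ⟨n, fun r hr => Subtype.ext (hn r hr)⟩
    · refine s_socle_sub hS _ a (torsionBySet R M (((a ⊓ b : Ideal R)) : Set R)) hsoc ?_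
      intro x _ hx
      exact mem_tBI.mpr fun r hr => hx r ((Submodule.mem_inf.mp hr).1)
  -- P := (N : b)
  have hNP : torsionGamma a M ≤ colonSub (torsionGamma a M) b :=
    fun x hx s hs => Submodule.smul_mem _ s hx
  have hPS : S (ModuleCat.of R (colonSub (torsionGamma a M) b)) := by
    obtain ⟨t, ht⟩ := IsNoetherian.noetherian b
    refine peel hS t.toList (fun g hg => ?_) ?_
    · have hgb : g ∈ b := by
        rw [← ht]
        exact subset_span (by simpa using hg)
      refine ⟨comap (colonSub (torsionGamma a M) b).subtype (torsionGamma a M), ?_, ?_⟩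
      · exact s_iso hS (comapSubtypeEquivOfLe hNP).symm hNS
      · intro x
        show g • (x : M) ∈ torsionGamma a M
        exact x.2 g hgb
    · have heq : torsionBySet R (colonSub (torsionGamma a M) b) {g | g ∈ t.toList}
          = torsionBySet R (colonSub (torsionGamma a M) b) (b : Set R) := by
        have hset : {g : R | g ∈ t.toList} = (↑t : Set R) := by
          ext g
          simp
        rw [hset, torsionBySet_eq_torsionBySet_span, ← Ideal.submodule_span_eq, ht]
      rw [heq]
      refine s_socle_sub hS _ b (torsionBySet R M (((a ⊓ b : Ideal R)) : Set R)) hsoc ?_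
      intro x _ hx
      exact mem_tBI.mpr fun r hr => hx r ((Submodule.mem_inf.mp hr).2)
  -- Q := M ⧸ N
  refine hS.extension M (torsionGamma a M) hNS ?_
  refine hb (ModuleCat.of R (M ⧸ torsionGamma a M)) (gamma_top.mpr fun q => ?_) ?_
  · obtain ⟨x, rfl⟩ := Submodule.Quotient.mk_surjective _ q
    obtain ⟨n, hn⟩ := hM x
    refine ⟨n, fun s hs => ?_⟩
    rw [← Submodule.Quotient.mk_smul, Submodule.Quotient.mk_eq_zero]
    refine mem_gamma.mpr ⟨n, fun r hr => ?_⟩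
    rw [smul_smul]
    refine hn (r * s) ?_
    have h1 : r * s ∈ a ^ n * b ^ n := Ideal.mul_mem_mul hr hs
    have h2 : a ^ n * b ^ n ≤ (a ⊓ b) ^ n := by
      rw [← mul_pow]
      exact Ideal.pow_right_mono Ideal.mul_le_inf n
    exact h2 h1
  · refine s_sub hS ?_ (s_map hS (torsionGamma a M).mkQ (colonSub (torsionGamma a M) b) hPS)
    intro q hq
    obtain ⟨x, rfl⟩ := Submodule.Quotient.mk_surjective _ q
    refine Submodule.mem_map.mpr ⟨x, ?_, rfl⟩
    intro s hs
    have h1 := mem_tBI.mp hq s hs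
    rwa [← Submodule.Quotient.mk_smul, Submodule.Quotient.mk_eq_zero] at h1

lemma hard [IsNoetherianRing R] (hS : IsSerreClass S) {a b : Ideal R}
    (h1 : CCond S (a + b)) (h2 : CCond S (a ⊓ b)) : CCond S a := by
  intro M hgam hsoc
  have hM : ∀ x : M, ∃ n : ℕ, ∀ r ∈ (a ^ n : Ideal R), r • x = 0 := gamma_top.mp hgam
  set K : Submodule R M := torsionBySet R M (((a ⊓ b : Ideal R)) : Set R) with hKdef
  have hKkill : ∀ (x : K) (r : R), r ∈ a ⊓ b → r • x = 0 :=
    fun x r hr => Subtype.ext (mem_tBI.mp x.2 r hr)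
  have hKtors : ∀ x : K, ∃ n : ℕ, ∀ r ∈ (a ^ n : Ideal R), r • x = 0 := by
    intro x
    obtain ⟨n, hn⟩ := hM (x : M)
    exact ⟨n, fun r hr => Subtype.ext (hn r hr)⟩
  -- VK := (0 :_K a)
  set VK : Submodule R K := torsionBySet R K (a : Set R) with hVKdef
  have hVKS : S (ModuleCat.of R VK) :=
    s_socle_sub hS K a (torsionBySet R M (a : Set R)) hsoc (fun x _ hx => mem_tBI.mpr hx)
  -- G := Γ_b K
  set G : Submodule R K := torsionGamma b K with hGdef
  have hGS : S (ModuleCat.of R G) := by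
    have hgamG : torsionGamma (a + b) G = ⊤ := by
      refine gamma_top.mpr fun x => ?_
      obtain ⟨m, hm⟩ := mem_gamma.mp x.2
      obtain ⟨n, hn⟩ := hKtors (x : K)
      refine ⟨n + m, fun r hr => Subtype.ext ?_⟩
      rw [Submodule.add_eq_sup] at hr
      obtain ⟨y, hy, z, hz, rfl⟩ := Submodule.mem_sup.mp (Ideal.sup_pow_add_le_pow_sup_pow hr)
      show (y + z) • (x : K) = 0
      rw [add_smul, hn y hy, hm z hz, add_zero]
    have hsocG : S (ModuleCat.of R (torsionBySet R G (((a + b : Ideal R)) : Set R))) := by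
      refine s_socle_sub hS G (a + b) VK hVKS ?_
      intro x _ hx
      exact mem_tBI.mpr fun r hr => hx r (mem_add_of_left hr)
    exact h1 (ModuleCat.of R G) hgamG hsocG
  -- V2K := (0 :_K a^2)
  set V2K : Submodule R K := torsionBySet R K ((a ^ 2 : Ideal R) : Set R) with hV2Kdef
  have hV2KS : S (ModuleCat.of R V2K) := by
    refine lemA hS a 2 V2K (fun x r hr => Subtype.ext (mem_tBI.mp x.2 r hr)) ?_
    exact s_socle_sub hS V2K a VK hVKS (fun x _ hx => mem_tBI.mpr hx)
  -- quotient torsion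
  have hQKtors : ∀ q : (K ⧸ VK), ∃ n : ℕ, ∀ r ∈ (a ^ n : Ideal R), r • q = 0 := by
    intro q
    obtain ⟨x, rfl⟩ := Submodule.Quotient.mk_surjective VK q
    obtain ⟨n, hn⟩ := hKtors x
    refine ⟨n, fun r hr => ?_⟩
    rw [← Submodule.Quotient.mk_smul, hn r hr, Submodule.Quotient.mk_zero]
  -- C' := Γ_b (K ⧸ VK)
  set C' : Submodule R (K ⧸ VK) := torsionGamma b (K ⧸ VK) with hC'def
  have hC'S : S (ModuleCat.of R C') := by
    have hgamC : torsionGamma (a + b) C' = ⊤ := by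
      refine gamma_top.mpr fun z => ?_
      obtain ⟨m, hm⟩ := mem_gamma.mp z.2
      obtain ⟨n, hn⟩ := hQKtors (z : K ⧸ VK)
      refine ⟨n + m, fun r hr => Subtype.ext ?_⟩
      rw [Submodule.add_eq_sup] at hr
      obtain ⟨y, hy, w, hw, rfl⟩ := Submodule.mem_sup.mp (Ideal.sup_pow_add_le_pow_sup_pow hr)
      show (y + w) • (z : K ⧸ VK) = 0
      rw [add_smul, hn y hy, hm w hw, add_zero]
    have hsocC : S (ModuleCat.of R (torsionBySet R C' (((a + b : Ideal R)) : Set R))) := by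
      refine s_socle_sub hS C' (a + b) (map VK.mkQ V2K) (s_map hS VK.mkQ V2K hV2KS) ?_
      intro q _ hq
      obtain ⟨x, rfl⟩ := Submodule.Quotient.mk_surjective VK q
      refine Submodule.mem_map.mpr ⟨x, ?_, rfl⟩
      refine mem_tBI.mpr (sq_kill ?_)
      intro r hr s hs
      have hsx : s • x ∈ VK := by
        have h' := hq s (mem_add_of_left hs)
        rwa [← Submodule.Quotient.mk_smul, Submodule.Quotient.mk_eq_zero] at h'
      rw [mul_smul]
      exact mem_tBI.mp hsx r hr
    exact h1 (ModuleCat.of R C') hgamC hsocC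
  -- Zsub := preimage of C' in K
  have hZS : S (ModuleCat.of R (C'.comap VK.mkQ)) := s_comap_mkq hS VK C' hVKS hC'S
  -- W := K ⧸ G
  have hWtors : ∀ w : (K ⧸ G), ∃ n : ℕ, ∀ r ∈ (a ^ n : Ideal R), r • w = 0 := by
    intro w
    obtain ⟨x, rfl⟩ := Submodule.Quotient.mk_surjective G w
    obtain ⟨n, hn⟩ := hKtors x
    refine ⟨n, fun r hr => ?_⟩
    rw [← Submodule.Quotient.mk_smul, hn r hr, Submodule.Quotient.mk_zero]
  -- VW := (0 :_{K⧸G} a)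
  set VW : Submodule R (K ⧸ G) := torsionBySet R (K ⧸ G) (a : Set R) with hVWdef
  have hVWS : S (ModuleCat.of R VW) := by
    refine s_sub hS ?_ (s_map hS G.mkQ (C'.comap VK.mkQ) hZS)
    intro w hw
    obtain ⟨x, rfl⟩ := Submodule.Quotient.mk_surjective G w
    refine Submodule.mem_map.mpr ⟨x, ?_, rfl⟩
    have hxG : ∀ r ∈ a, r • x ∈ G := by
      intro r hr
      have h' := mem_tBI.mp hw r hr
      rwa [← Submodule.Quotient.mk_smul, Submodule.Quotient.mk_eq_zero] at h'
    obtain ⟨t, ht⟩ := IsNoetherian.noetherian a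
    have hgen : ∀ g ∈ t, ∃ m : ℕ, ∀ s ∈ (b ^ m : Ideal R), s • g • x = 0 := by
      intro g hg
      have hga : g ∈ a := by
        rw [← ht]
        exact subset_span (by simpa using hg)
      exact mem_gamma.mp (hxG g hga)
    obtain ⟨m, hm⟩ := uniform b t hgen
    show VK.mkQ x ∈ C'
    refine mem_gamma.mpr ⟨m, fun s hs => ?_⟩
    rw [mkQ_apply, ← Submodule.Quotient.mk_smul, Submodule.Quotient.mk_eq_zero]
    refine mem_tBI.mpr fun r hr => ?_
    rw [smul_smul, mul_comm, ← smul_smul]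
    exact hm s hs r (by rw [ht]; exact hr)
  -- V2W := (0 :_{K⧸G} a^2)
  set V2W : Submodule R (K ⧸ G) := torsionBySet R (K ⧸ G) ((a ^ 2 : Ideal R) : Set R)
    with hV2Wdef
  have hV2WS : S (ModuleCat.of R V2W) := by
    refine lemA hS a 2 V2W (fun x r hr => Subtype.ext (mem_tBI.mp x.2 r hr)) ?_
    exact s_socle_sub hS V2W a VW hVWS (fun x _ hx => mem_tBI.mpr hx)
  -- W2 := (K ⧸ G) ⧸ VW
  have hW2S : S (ModuleCat.of R ((K ⧸ G) ⧸ VW)) := by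
    have hbkill : ∀ (w : K ⧸ G), ∀ s ∈ b, s • w ∈ VW := by
      intro w s hs
      obtain ⟨x, rfl⟩ := Submodule.Quotient.mk_surjective G w
      rw [← Submodule.Quotient.mk_smul]
      refine mem_tBI.mpr fun r hr => ?_
      rw [← Submodule.Quotient.mk_smul, smul_smul]
      have hz : (r * s) • x = (0 : K) :=
        hKkill x (r * s) (Ideal.mul_le_inf (Ideal.mul_mem_mul hr hs))
      rw [hz, Submodule.Quotient.mk_zero]
    have hgamW2 : torsionGamma (a + b) ((K ⧸ G) ⧸ VW) = ⊤ := by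
      refine gamma_top.mpr fun z => ?_
      obtain ⟨w, rfl⟩ := Submodule.Quotient.mk_surjective VW z
      obtain ⟨n, hn⟩ := hWtors w
      refine ⟨n + 1, fun r hr => ?_⟩
      rw [Submodule.add_eq_sup] at hr
      obtain ⟨y, hy, s, hs, rfl⟩ := Submodule.mem_sup.mp (Ideal.sup_pow_add_le_pow_sup_pow hr)
      rw [pow_one] at hs
      rw [add_smul, ← Submodule.Quotient.mk_smul, hn y hy, Submodule.Quotient.mk_zero,
        zero_add, ← Submodule.Quotient.mk_smul,
        (Submodule.Quotient.mk_eq_zero VW).mpr (hbkill w s hs)]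
    have hsocW2 : S (ModuleCat.of R (torsionBySet R ((K ⧸ G) ⧸ VW)
        (((a + b : Ideal R)) : Set R))) := by
      refine s_sub hS ?_ (s_map hS VW.mkQ V2W hV2WS)
      intro z hz
      obtain ⟨w, rfl⟩ := Submodule.Quotient.mk_surjective VW z
      refine Submodule.mem_map.mpr ⟨w, ?_, rfl⟩
      refine mem_tBI.mpr (sq_kill ?_)
      intro r hr s hs
      have hrw : r • w ∈ VW := by
        have h' := mem_tBI.mp hz r (mem_add_of_left hr)
        rwa [← Submodule.Quotient.mk_smul, Submodule.Quotient.mk_eq_zero] at h'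
      have h'' := mem_tBI.mp hrw s hs
      rw [mul_comm, mul_smul]
      exact h''
    exact h1 (ModuleCat.of R ((K ⧸ G) ⧸ VW)) hgamW2 hsocW2
  -- assemble
  have hWS : S (ModuleCat.of R (K ⧸ G)) :=
    hS.extension (ModuleCat.of R (K ⧸ G)) VW hVWS hW2S
  have hKS : S (ModuleCat.of R K) :=
    hS.extension (ModuleCat.of R K) G hGS hWS
  refine h2 M (gamma_top.mpr fun x => ?_) hKS
  obtain ⟨n, hn⟩ := hM x
  exact ⟨n, fun r hr => hn r (Ideal.pow_right_mono inf_le_left n hr)⟩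

end Stmt6Aux

/-- A Serre subcategory `S` satisfies both `C_a` and `C_b` if and only if it satisfies
both `C_{a+b}` and `C_{a∩b}`. -/
theorem stmt6 [IsNoetherianRing R] (a b : Ideal R)
    (S : ModuleCat.{u} R → Prop)
    (hS : IsSerreClass S) :
    (CCond S a ∧ CCond S b) ↔ (CCond S (a + b) ∧ CCond S (a ⊓ b)) := by
  constructor
  · rintro ⟨ha, hb⟩
    exact ⟨Stmt6Aux.sum_easy hS ha hb, Stmt6Aux.inf_easy hS ha hb⟩
  · rintro ⟨hs, hi⟩
    refine ⟨Stmt6Aux.hard hS hs hi, ?_⟩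
    have hs' : CCond S (b + a) := by rwa [add_comm b a]
    have hi' : CCond S (b ⊓ a) := by rwa [inf_comm b a]
    exact Stmt6Aux.hard hS hs' hi'
end

section
/- Let R be a commutative noetherian ring, let 𝔪_1, …, 𝔪_n be maximal ideals of R, and let 𝒮 be a Serre subcategory of R-modules. If 𝒮 satisfies the C_{𝔪_1 ⋯ 𝔪_n} condition (for the product ideal 𝔪_1 ⋯ 𝔪_n), then 𝒮 satisfies the C_{𝔪_i} condition for each i = 1, …, n. -/
universe u

open Submodule

variable {R : Type u} [CommRing R]

/-- annihilator of a single element as an ideal -/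
noncomputable abbrev annEl {M : Type u} [AddCommGroup M] [Module R M] (x : M) : Ideal R :=
  LinearMap.ker (LinearMap.toSpanSingleton R M x)

lemma mem_annEl {M : Type u} [AddCommGroup M] [Module R M] {x : M} {r : R} :
    r ∈ annEl x ↔ r • x = 0 := by
  simp [annEl, LinearMap.mem_ker, LinearMap.toSpanSingleton_apply]

lemma ann_key {M : Type u} [AddCommGroup M] [Module R M] (p : Ideal R) (hp : p.IsMaximal)
    (L : List (Ideal R)) (hL : ∀ q ∈ L, q.IsMaximal) (k : ℕ) (x : M)
    (hx : L.prod ≤ annEl x) (htor : p ^ k ≤ annEl x) :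
    p ^ L.length ≤ annEl x := by
  induction L generalizing x with
  | nil =>
      have : (1 : R) • x = 0 := mem_annEl.mp (hx (by simp [Ideal.one_eq_top]))
      intro r _
      rw [mem_annEl]
      rw [one_smul] at this
      simp [this]
  | cons q L ih =>
      have hqmax : q.IsMaximal := hL q List.mem_cons_self
      have hLmax : ∀ q' ∈ L, q'.IsMaximal := fun q' h => hL q' (List.mem_cons_of_mem _ h)
      rw [List.prod_cons] at hx
      by_cases hq : q = p
      · subst hq
        rw [List.length_cons, pow_succ]
        rw [Ideal.mul_le]
        intro r hr s hs
        have hann : L.prod ≤ annEl (s • x) := by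
          intro r' hr'
          rw [mem_annEl, smul_smul, mul_comm, ← smul_smul, smul_smul]
          exact mem_annEl.mp (hx (Ideal.mul_mem_mul hs hr'))
        have htor' : q ^ k ≤ annEl (s • x) := by
          intro r' hr'
          rw [mem_annEl, smul_comm, mem_annEl.mp (htor hr'), smul_zero]
        have := ih hLmax (s • x) hann htor'
        rw [mem_annEl, ← smul_smul]
        exact mem_annEl.mp (this hr)
      · have hsup : q ⊔ p ^ k = ⊤ := Ideal.sup_pow_eq_top (hqmax.coprime_of_ne hp hq)
        obtain ⟨c, hc, d, hd, hcd⟩ := Submodule.mem_sup.mp (hsup ▸ Submodule.mem_top (x := (1:R)))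
        have hxc : c • x = x := by
          have : (c + d) • x = x := by rw [hcd, one_smul]
          rwa [add_smul, mem_annEl.mp (htor hd), add_zero] at this
        have hann : L.prod ≤ annEl x := by
          intro r' hr'
          rw [mem_annEl, ← hxc, smul_smul, mul_comm]
          exact mem_annEl.mp (hx (Ideal.mul_mem_mul hc hr'))
        have := ih hLmax x hann htor
        rw [List.length_cons]
        exact le_trans (Ideal.pow_le_pow_right (Nat.le_succ _)) this

/-- Serre classes are closed under binary products. -/
lemma IsSerreClass.prodMem {S : ModuleCat.{u} R → Prop} (hS : IsSerreClass S)
    (M N : Type u) [AddCommGroup M] [Module R M] [AddCommGroup N] [Module R N]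
    (hM : S (ModuleCat.of R M)) (hN : S (ModuleCat.of R N)) :
    S (ModuleCat.of R (M × N)) := by
  apply hS.extension (ModuleCat.of R (M × N)) (LinearMap.range (LinearMap.inl R M N))
  · exact hS.iso (M := ModuleCat.of R M)
      (LinearEquiv.ofInjective (LinearMap.inl R M N) LinearMap.inl_injective) hM
  · refine hS.iso (M := ModuleCat.of R N) ?_ hN
    exact (LinearEquiv.ofInjective (LinearMap.inr R M N) LinearMap.inr_injective).trans
      (Submodule.quotientEquivOfIsCompl _ _ LinearMap.isCompl_range_inl_inr).symm

/-- Serre classes are closed under finite powers. -/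
lemma IsSerreClass.piMem {S : ModuleCat.{u} R → Prop} (hS : IsSerreClass S)
    (r : ℕ) (N : Type u) [AddCommGroup N] [Module R N]
    (hN : S (ModuleCat.of R N)) : S (ModuleCat.of R (Fin r → N)) := by
  induction r with
  | zero => exact hS.zero _ inferInstance
  | succ r ih =>
      have e : (Fin (r+1) → N) ≃ₗ[R] N × (Fin r → N) :=
        { toFun := fun f => (f 0, fun j => f j.succ)
          invFun := fun p => Fin.cons p.1 p.2
          map_add' := fun f g => rfl
          map_smul' := fun c f => rfl
          left_inv := fun f => by
            ext j
            refine Fin.cases ?_ (fun i => ?_) j <;> simp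
          right_inv := fun p => by
            ext <;> simp }
      exact hS.iso e.symm (hS.prodMem N (Fin r → N) hN ih)

lemma IsSerreClass.piMem' {S : ModuleCat.{u} R → Prop} (hS : IsSerreClass S)
    (ι : Type u) [Fintype ι] (N : Type u) [AddCommGroup N] [Module R N]
    (hN : S (ModuleCat.of R N)) : S (ModuleCat.of R (ι → N)) :=
  hS.iso (LinearEquiv.funCongrLeft R N (Fintype.equivFin ι)) (hS.piMem _ N hN)

/-- If `(0 :_M p) ∈ S`, then `(0 :_M p^k) ∈ S` for all `k ≥ 1`, for `p` finitely generated. -/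
lemma torsionPow_mem {S : ModuleCat.{u} R → Prop} (hS : IsSerreClass S)
    {M : Type u} [AddCommGroup M] [Module R M] (p : Ideal R) (hfg : p.FG)
    (h1 : S (ModuleCat.of R (torsionBySet R M (p : Set R)))) :
    ∀ k : ℕ, S (ModuleCat.of R (torsionBySet R M ((p ^ (k+1) : Ideal R) : Set R))) := by
  intro k
  induction k with
  | zero => rw [zero_add, pow_one]; exact h1
  | succ k ih =>
      obtain ⟨s, hs⟩ := hfg
      set N := torsionBySet R M ((p ^ (k+1) : Ideal R) : Set R) with hN
      set N' := torsionBySet R M ((p ^ (k+1+1) : Ideal R) : Set R) with hN'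
      have hsp : ∀ j : R, j ∈ (s : Set R) → j ∈ p := fun j hj => by
        rw [← hs]; exact Ideal.subset_span hj
      have hmem : ∀ (x : M), x ∈ N' → ∀ c : R, c ∈ p → c • x ∈ N := by
        intro x hx c hc
        rw [hN, mem_torsionBySet_iff]
        rintro ⟨a, ha⟩
        have : a * c ∈ p ^ (k+1+1) := by
          rw [pow_succ]
          exact Ideal.mul_mem_mul ha hc
        rw [smul_smul]
        exact (mem_torsionBySet_iff _ _).mp hx ⟨a * c, this⟩
      set φ : N' →ₗ[R] (↥(s : Set R) → N) :=
        LinearMap.pi (fun j => LinearMap.codRestrict N ((j : R) • N'.subtype)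
          (fun x => hmem x x.2 j (hsp j j.2))) with hφ
      have hker : S (ModuleCat.of R (LinearMap.ker φ)) := by
        have hkmem : ∀ x : LinearMap.ker φ, N'.subtype ((LinearMap.ker φ).subtype x) ∈
            torsionBySet R M (p : Set R) := by
          intro x
          rw [mem_torsionBySet_iff]
          rintro ⟨a, ha⟩
          have hple : p ≤ annEl ((x : N') : M) := by
            rw [← hs, Ideal.span_le]
            intro j hj
            rw [SetLike.mem_coe, mem_annEl]
            have h0 := congr_fun (LinearMap.mem_ker.mp x.2) ⟨j, hj⟩
            have h1 := congr_arg Subtype.val h0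
            exact h1
          exact mem_annEl.mp (hple ha)
        set ι : LinearMap.ker φ →ₗ[R] torsionBySet R M (p : Set R) :=
          LinearMap.codRestrict _ (N'.subtype.comp (LinearMap.ker φ).subtype) hkmem with hι
        have hinj : Function.Injective ι := by
          intro x y hxy
          have hv := congr_arg Subtype.val hxy
          apply Subtype.ext
          apply Subtype.ext
          exact hv
        exact hS.iso (LinearEquiv.ofInjective ι hinj).symm
          (hS.subobj (ModuleCat.of R (torsionBySet R M (p : Set R))) (LinearMap.range ι) h1)
      have hquot : S (ModuleCat.of R ((N' : Type u) ⧸ LinearMap.ker φ)) := by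
        refine hS.iso (M := ModuleCat.of R (LinearMap.range φ)) (φ.quotKerEquivRange).symm ?_
        exact hS.subobj (ModuleCat.of R (↥(s : Set R) → N)) (LinearMap.range φ)
          (hS.piMem' _ _ ih)
      exact hS.extension (ModuleCat.of R N') (LinearMap.ker φ) hker hquot

/-- If a Serre subcategory `S` satisfies `C_{m₁⋯mₙ}` for maximal ideals `m₁, …, mₙ`,
then it satisfies `C_{mᵢ}` for each `i`. -/
theorem stmt9 [IsNoetherianRing R] (n : ℕ) (m : Fin n → Ideal R)
    (hm : ∀ i, (m i).IsMaximal)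
    (S : ModuleCat.{u} R → Prop)
    (hS : IsSerreClass S)
    (h : CCond S (∏ i, m i)) :
    ∀ i, CCond S (m i) := by
  intro i M hG hA
  set a : Ideal R := ∏ j, m j with ha
  have hale : a ≤ m i := le_trans Ideal.prod_le_inf (Finset.inf_le (Finset.mem_univ i))
  -- Step A : torsionGamma a M = ⊤
  have hGa : torsionGamma a M = ⊤ := by
    rw [eq_top_iff, ← hG]
    refine iSup_le fun k => le_iSup_of_le k ?_
    exact torsionBySet_le_torsionBySet_of_subset (Ideal.pow_right_mono hale k)
  -- every element is (m i)-power torsion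
  have hdir : Directed (· ≤ ·) fun k : ℕ => torsionBySet R M (((m i) ^ k : Ideal R) : Set R) := by
    intro k l
    refine ⟨max k l, ?_, ?_⟩ <;>
      exact torsionBySet_le_torsionBySet_of_subset
        (Ideal.pow_le_pow_right (by omega))
  have hexists : ∀ x : M, ∃ k : ℕ, x ∈ torsionBySet R M (((m i) ^ k : Ideal R) : Set R) := by
    intro x
    have : x ∈ torsionGamma (m i) M := hG ▸ Submodule.mem_top
    exact (Submodule.mem_iSup_of_directed _ hdir).mp this
  -- Step B : (0 : a) ≤ (0 : (m i)^(n+1))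
  have hle : torsionBySet R M (a : Set R) ≤
      torsionBySet R M (((m i) ^ (n+1) : Ideal R) : Set R) := by
    intro x hx
    obtain ⟨k, hk⟩ := hexists x
    have hx' : (List.ofFn m).prod ≤ annEl x := by
      rw [List.prod_ofFn, ← ha]
      intro r hr
      rw [mem_annEl]
      exact (mem_torsionBySet_iff _ _).mp hx ⟨r, hr⟩
    have htor : (m i) ^ k ≤ annEl x := by
      intro r hr
      rw [mem_annEl]
      exact (mem_torsionBySet_iff _ _).mp hk ⟨r, hr⟩
    have hkey := ann_key (m i) (hm i) (List.ofFn m)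
      (fun q hq => by obtain ⟨j, rfl⟩ := List.mem_ofFn.mp hq; exact hm j) k x hx' htor
    rw [List.length_ofFn] at hkey
    have : (m i) ^ (n + 1) ≤ annEl x :=
      le_trans (Ideal.pow_le_pow_right (Nat.le_succ _)) hkey
    rw [mem_torsionBySet_iff]
    rintro ⟨r, hr⟩
    exact mem_annEl.mp (this hr)
  -- S ((0 : (m i)^(n+1)))
  have hfg : (m i).FG := (isNoetherianRing_iff_ideal_fg R).mp ‹_› (m i)
  have hSpow := torsionPow_mem hS (m i) hfg hA n
  -- transfer to (0 : a)
  have hSa : S (ModuleCat.of R (torsionBySet R M (a : Set R))) := by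
    refine hS.iso (M := ModuleCat.of R
        (Submodule.comap (torsionBySet R M (((m i) ^ (n+1) : Ideal R) : Set R)).subtype
          (torsionBySet R M (a : Set R))))
      (Submodule.comapSubtypeEquivOfLe hle) ?_
    exact hS.subobj (ModuleCat.of R (torsionBySet R M (((m i) ^ (n+1) : Ideal R) : Set R)))
      (Submodule.comap _ _) hSpow
  exact h M hGa hSa
end

section
/- Let R be a commutative artinian ring and let 𝒮 be a Serre subcategory of R-modules. Then 𝒮 satisfies the C_𝔞 condition for every ideal 𝔞 of R. -/
universe u

open Submodule

variable {R : Type u} [CommRing R]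

/-- Hopkins–Levitzki, commutative case: a commutative artinian ring is noetherian. -/
theorem myHopkins [IsArtinianRing R] : IsNoetherianRing R := by
  obtain ⟨n, hn⟩ : IsNilpotent ((⊥ : Ideal R).jacobson) :=
    IsArtinianRing.isNilpotent_jacobson_bot
  set J : Ideal R := (⊥ : Ideal R).jacobson with hJdef
  have hJrad : J = nilradical R := by
    apply le_antisymm
    · intro x hx
      have hx' : x ^ n ∈ J ^ n := Ideal.pow_mem_pow hx n
      rw [hn] at hx'
      exact mem_nilradical.mpr ⟨n, by simpa using hx'⟩
    · exact le_sInf fun K hK => nilradical_le_prime K (H := hK.2.isPrime)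
  have hred : IsReduced (R ⧸ J) := by
    refine (Ideal.isRadical_iff_quotient_reduced J).mp ?_
    rw [hJrad]
    exact Ideal.radical_isRadical (⊥ : Ideal R)
  haveI : IsSemisimpleRing (R ⧸ J) := IsArtinianRing.isSemisimpleRing_of_isReduced (R ⧸ J)
  have key : ∀ i : ℕ, IsNoetherian R (R ⧸ (J ^ i : Ideal R)) := by
    intro i
    induction i with
    | zero =>
      haveI : Subsingleton (R ⧸ (J ^ 0 : Ideal R)) := by
        rw [pow_zero, Ideal.one_eq_top]
        exact Submodule.Quotient.subsingleton_iff.mpr rfl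
      infer_instance
    | succ i ih =>
      have hle : (J ^ (i + 1) : Ideal R) ≤ J ^ i := Ideal.pow_le_pow_right (Nat.le_succ i)
      set P : Submodule R (R ⧸ (J ^ (i + 1) : Ideal R)) :=
        Submodule.map (J ^ (i + 1) : Ideal R).mkQ (J ^ i : Ideal R) with hP
      refine (isNoetherian_iff_submodule_quotient P).mpr ⟨?_, ?_⟩
      · -- P is killed by J
        have hT : Module.IsTorsionBySet R P (J : Set R) := by
          rintro ⟨x, hx⟩ ⟨r, hr⟩
          obtain ⟨y, hy, rfl⟩ := Submodule.mem_map.mp hx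
          apply Subtype.ext
          show r • (J ^ (i + 1) : Ideal R).mkQ y = 0
          rw [← map_smul, Submodule.mkQ_apply, Submodule.Quotient.mk_eq_zero]
          have : r * y ∈ J * J ^ i := Ideal.mul_mem_mul hr hy
          rwa [← pow_succ'] at this
        letI : Module (R ⧸ J) P := hT.module
        haveI : IsScalarTower R (R ⧸ J) P := hT.isScalarTower
        haveI hart : IsArtinian (R ⧸ J) P := isArtinian_of_tower R inferInstance
        haveI : IsNoetherian (R ⧸ J) P :=
          ((IsSemisimpleModule.finite_tfae (R := R ⧸ J) (M := P)).out 2 1).mp hart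
        -- transfer noetherian down to R
        let F : Submodule R P ↪o Submodule (R ⧸ J) P :=
          { toFun := fun N =>
              { carrier := N
                add_mem' := fun h1 h2 => N.add_mem h1 h2
                zero_mem' := N.zero_mem
                smul_mem' := by
                  intro c x hx
                  obtain ⟨r, rfl⟩ := Ideal.Quotient.mk_surjective c
                  have : (Ideal.Quotient.mk J r) • x = r • x := hT.mk_smul r x
                  rw [this]
                  exact N.smul_mem r hx }
            inj' := fun N₁ N₂ h => by
              ext x
              exact ⟨fun hx => (SetLike.ext_iff.mp h x).mp hx,
                fun hx => (SetLike.ext_iff.mp h x).mpr hx⟩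
            map_rel_iff' := Iff.rfl }
        exact isNoetherian_mk ⟨F.dual.wellFounded (inferInstance : IsNoetherian (R ⧸ J) P).wf⟩
      · -- quotient is R ⧸ J^i
        have e := Submodule.quotientQuotientEquivQuotient (J ^ (i + 1) : Ideal R) (J ^ i) hle
        haveI := ih
        exact isNoetherian_of_linearEquiv e.symm
  have hkey := key n
  rw [hn, Ideal.zero_eq_bot] at hkey
  haveI := hkey
  exact isNoetherian_of_linearEquiv (Submodule.quotEquivOfEqBot (⊥ : Ideal R) rfl)

theorem serre_prod {S : ModuleCat.{u} R → Prop} (hS : IsSerreClass S)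
    {M N : ModuleCat.{u} R} (hM : S M) (hN : S N) : S (ModuleCat.of R (M × N)) := by
  apply hS.extension (ModuleCat.of R (M × N)) (Submodule.fst R M N)
  · exact hS.iso (Submodule.fstEquiv R M N).symm hM
  · have e : ((M × N) ⧸ Submodule.fst R M N) ≃ₗ[R] N :=
      LinearMap.quotKerEquivOfSurjective (LinearMap.snd R M N) (fun n => ⟨(0, n), rfl⟩)
    exact hS.iso (N := ModuleCat.of R ((M × N) ⧸ Submodule.fst R M N)) e.symm hN

/-- `(Fin (k+1) → N) ≃ₗ[R] N × (Fin k → N)` -/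
def finConsEquiv (k : ℕ) (N : Type u) [AddCommGroup N] [Module R N] :
    (Fin (k + 1) → N) ≃ₗ[R] N × (Fin k → N) where
  toFun f := (f 0, fun i => f i.succ)
  invFun p := Fin.cons p.1 p.2
  map_add' f g := rfl
  map_smul' c f := rfl
  left_inv f := by
    funext i
    refine Fin.cases ?_ (fun j => ?_) i <;> simp
  right_inv p := by
    refine Prod.ext ?_ ?_ <;> simp

theorem serre_pi {S : ModuleCat.{u} R → Prop} (hS : IsSerreClass S)
    {N : ModuleCat.{u} R} (hN : S N) : ∀ k : ℕ, S (ModuleCat.of R (Fin k → N))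
  | 0 => hS.zero _ ⟨fun f g => funext fun i => i.elim0⟩
  | (k + 1) => by
    have ih := serre_pi hS hN k
    have hprod : S (ModuleCat.of R (N × (Fin k → N))) := serre_prod hS hN ih
    exact hS.iso (M := ModuleCat.of R (N × (Fin k → N)))
      (finConsEquiv k N).symm hprod

theorem serre_fintype_pi {S : ModuleCat.{u} R → Prop} (hS : IsSerreClass S)
    {N : ModuleCat.{u} R} (hN : S N) (ι : Type u) [Fintype ι] :
    S (ModuleCat.of R (ι → N)) := by
  classical
  have e := Fintype.equivFin ι
  exact hS.iso (M := ModuleCat.of R (Fin (Fintype.card ι) → N))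
    (LinearEquiv.funCongrLeft R N e) (serre_pi hS hN _)

/-- The main induction: if `a ^ n` kills `M` and `(0 :_M a) ∈ S`, then `M ∈ S`. -/
theorem mainStep [IsArtinianRing R] {S : ModuleCat.{u} R → Prop} (hS : IsSerreClass S)
    (a : Ideal R) :
    ∀ (n : ℕ) (M : ModuleCat.{u} R),
      (∀ (m : M) (x : R), x ∈ a ^ n → x • m = 0) →
      S (ModuleCat.of R (torsionBySet R M (a : Set R))) → S M := by
  intro n
  induction n with
  | zero =>
    intro M h _
    have h1 : ∀ m : M, m = 0 := fun m => by
      simpa using h m 1 (by simp [Ideal.one_eq_top])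
    exact hS.zero M ⟨fun m m' => by rw [h1 m, h1 m']⟩
  | succ n ih =>
    intro M h hK
    haveI : IsNoetherianRing R := myHopkins
    obtain ⟨t, ht⟩ : a.FG := IsNoetherian.noetherian a
    have htx : ∀ x ∈ t, x ∈ a := fun x hx => ht ▸ subset_span hx
    set K : Submodule R M := torsionBySet R M (a : Set R) with hKdef
    set K₂ : Submodule R M := torsionBySet R M ((a ^ 2 : Ideal R) : Set R) with hK₂def
    -- ψ : K₂ →ₗ[R] (t → K)
    have hψmem : ∀ (m : K₂) (x : t), (x : R) • (m : M) ∈ K := by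
      rintro m ⟨x, hx⟩
      refine (mem_torsionBySet_iff _ _).mpr ?_
      rintro ⟨r, hr⟩
      show r • (x • (m : M)) = 0
      rw [smul_smul]
      refine (mem_torsionBySet_iff _ _).mp m.2 ⟨r * x, ?_⟩
      rw [pow_two]
      exact Ideal.mul_mem_mul hr (htx x hx)
    let ψ : K₂ →ₗ[R] (t → K) :=
      { toFun := fun m x => ⟨(x : R) • (m : M), hψmem m x⟩
        map_add' := fun m₁ m₂ => by
          funext x
          apply Subtype.ext
          show (x : R) • ((m₁ : M) + (m₂ : M)) = (x : R) • (m₁ : M) + (x : R) • (m₂ : M)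
          rw [smul_add]
        map_smul' := fun c m => by
          funext x
          apply Subtype.ext
          show (x : R) • (c • (m : M)) = c • ((x : R) • (m : M))
          rw [smul_comm] }
    -- T = (0 :_{M/K} a)
    set T : Submodule R (M ⧸ K) := torsionBySet R (M ⧸ K) (a : Set R) with hTdef
    have hmap : ∀ m : K₂, K.mkQ (m : M) ∈ T := by
      intro m
      refine (mem_torsionBySet_iff _ _).mpr ?_
      rintro ⟨r, hr⟩
      show r • K.mkQ (m : M) = 0
      rw [← map_smul, Submodule.mkQ_apply, Submodule.Quotient.mk_eq_zero]
      refine (mem_torsionBySet_iff _ _).mpr ?_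
      rintro ⟨s, hs⟩
      show s • (r • (m : M)) = 0
      rw [smul_smul]
      refine (mem_torsionBySet_iff _ _).mp m.2 ⟨s * r, ?_⟩
      rw [pow_two]
      exact Ideal.mul_mem_mul hs hr
    let π : K₂ →ₗ[R] T := LinearMap.codRestrict T (K.mkQ.comp K₂.subtype) hmap
    have hπsurj : Function.Surjective π := by
      rintro ⟨q, hq⟩
      obtain ⟨m, rfl⟩ := K.mkQ_surjective q
      have hm : m ∈ K₂ := by
        refine (mem_torsionBySet_iff _ _).mpr ?_
        rintro ⟨y, hy⟩
        show y • m = 0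
        have hy' : y ∈ a * a := by rwa [← pow_two]
        refine Submodule.mul_induction_on hy' ?_ ?_
        · intro i hi j hj
          have hjm : j • m ∈ K := by
            have := (mem_torsionBySet_iff _ _).mp hq ⟨j, hj⟩
            show j • m ∈ K
            rwa [← Submodule.Quotient.mk_eq_zero K, ← Submodule.mkQ_apply, map_smul]
          rw [mul_smul]
          exact (mem_torsionBySet_iff _ _).mp hjm ⟨i, hi⟩
        · intro y₁ y₂ h₁ h₂
          rw [add_smul, h₁, h₂, add_zero]
      exact ⟨⟨m, hm⟩, Subtype.ext rfl⟩
    have hker : LinearMap.ker π = LinearMap.ker ψ := by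
      ext m
      have h1 : m ∈ LinearMap.ker π ↔ (m : M) ∈ K := by
        rw [LinearMap.mem_ker]
        constructor
        · intro hm
          have := congrArg (Subtype.val) hm
          exact (Submodule.Quotient.mk_eq_zero K).mp this
        · intro hm
          apply Subtype.ext
          exact (Submodule.Quotient.mk_eq_zero K).mpr hm
      have h2 : m ∈ LinearMap.ker ψ ↔ ∀ x : t, (x : R) • (m : M) = 0 := by
        rw [LinearMap.mem_ker]
        constructor
        · intro hm x
          have := congrArg (fun f => (f x : M)) hm
          exact this
        · intro hm
          funext x
          exact Subtype.ext (hm x)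
      rw [h1, h2]
      constructor
      · intro hm x
        exact (mem_torsionBySet_iff _ _).mp hm ⟨(x : R), htx x x.2⟩
      · intro hm
        rw [hKdef, ← ht, ← torsionBySet_eq_torsionBySet_span]
        exact (mem_torsionBySet_iff _ _).mpr fun x => hm ⟨(x : R), x.2⟩
    -- S holds for T
    have h1 : S (ModuleCat.of R (t → K)) :=
      serre_fintype_pi hS (N := ModuleCat.of R K) hK (↥t)
    have h2 : S (ModuleCat.of R (LinearMap.range ψ)) :=
      hS.subobj (ModuleCat.of R (↥t → ↥K)) (LinearMap.range ψ) h1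
    have h3 : S (ModuleCat.of R (↥K₂ ⧸ LinearMap.ker ψ)) :=
      hS.iso (M := ModuleCat.of R (LinearMap.range ψ))
        (LinearMap.quotKerEquivRange ψ).symm h2
    have h4 : S (ModuleCat.of R T) :=
      hS.iso (M := ModuleCat.of R (↥K₂ ⧸ LinearMap.ker ψ))
        ((Submodule.quotEquivOfEq _ _ hker.symm).trans
          (LinearMap.quotKerEquivOfSurjective π hπsurj)) h3
    -- M ⧸ K belongs to S by the induction hypothesis
    have hq : S (ModuleCat.of R (M ⧸ K)) := by
      refine ih (ModuleCat.of R (M ⧸ K)) ?_ ?_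
      · intro m x hx
        obtain ⟨m₀, rfl⟩ := K.mkQ_surjective m
        show x • K.mkQ m₀ = 0
        rw [← map_smul, Submodule.mkQ_apply, Submodule.Quotient.mk_eq_zero]
        refine (mem_torsionBySet_iff _ _).mpr ?_
        rintro ⟨r, hr⟩
        show r • (x • m₀) = 0
        rw [smul_smul]
        refine h m₀ (r * x) ?_
        rw [mul_comm, pow_succ]
        exact Ideal.mul_mem_mul hx hr
      · exact h4
    exact hS.extension M K hK hq

/-- Over a commutative artinian ring, every Serre subcategory satisfies the `C_a`
condition for every ideal `a`. -/
theorem stmt10 [IsArtinianRing R]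
    (S : ModuleCat.{u} R → Prop)
    (hS : IsSerreClass S) :
    ∀ a : Ideal R, CCond S a := by
  intro a M hΓ hK
  obtain ⟨n, hn⟩ := IsArtinian.monotone_stabilizes (R := R) (M := R)
    ⟨fun k => OrderDual.toDual (a ^ k), fun i j h => Ideal.pow_le_pow_right h⟩
  have htop : torsionBySet R M ((a ^ n : Ideal R) : Set R) = ⊤ := by
    rw [eq_top_iff, ← hΓ]
    refine iSup_le fun k => ?_
    rcases le_total k n with h | h
    · exact torsionBySet_le_torsionBySet_of_subset
        (fun x hx => Ideal.pow_le_pow_right h hx)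
    · have hnk : a ^ n = a ^ k := hn k h
      rw [hnk]
  refine mainStep hS a n M (fun m x hx => ?_) hK
  exact (mem_torsionBySet_iff _ _).mp (Submodule.eq_top_iff'.mp htop m) ⟨x, hx⟩
end

section
/- Let R be a commutative noetherian ring and let 𝔞 be an ideal of R. If the class ℳ of all minimax R-modules and the class ℱ of all R-modules of finite length both satisfy the C_𝔞 condition, then the class of all finitely generated R-modules satisfies the C_𝔞 condition. -/
universe u

open Submodule

variable {R : Type u} [CommRing R]

/-- The class of minimax `R`-modules: modules having a finitely generated submodule
with artinian quotient. -/
def minimaxClass : ModuleCat.{u} R → Prop :=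
  fun M => ∃ N : Submodule R M, Module.Finite R N ∧ IsArtinian R (M ⧸ N)

/-- The class of `R`-modules of finite length (both noetherian and artinian). -/
def finiteLengthClass : ModuleCat.{u} R → Prop :=
  fun M => IsNoetherian R M ∧ IsArtinian R M

/-- The class of finitely generated `R`-modules. -/
def fgClass : ModuleCat.{u} R → Prop :=
  fun M => Module.Finite R M

/-- If the class of minimax modules and the class of finite length modules both satisfy
the `C_a` condition, then the class of finitely generated modules satisfies `C_a`. -/
theorem stmt12 [IsNoetherianRing R] (a : Ideal R)
    (hmm : CCond (minimaxClass : ModuleCat.{u} R → Prop) a)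
    (hfl : CCond (finiteLengthClass : ModuleCat.{u} R → Prop) a) :
    CCond (fgClass : ModuleCat.{u} R → Prop) a := by
  intro M hG hsoc
  have hsoc' : Module.Finite R (torsionBySet R M (a : Set R)) := hsoc
  -- every element is killed by some power of `a`
  have hdir : Directed (· ≤ ·)
      (fun n : ℕ => torsionBySet R (↑M : Type u) ((a ^ n : Ideal R) : Set R)) := by
    intro m n
    refine ⟨m + n, ?_, ?_⟩ <;>
      exact torsionBySet_le_torsionBySet_of_subset
        (Ideal.pow_le_pow_right (by omega))
  have hpow : ∀ m : (↑M : Type u), ∃ n : ℕ, ∀ r ∈ (a ^ n : Ideal R), r • m = 0 := by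
    intro m
    have hm : m ∈ torsionGamma a (↑M : Type u) := hG ▸ Submodule.mem_top
    obtain ⟨n, hn⟩ := (Submodule.mem_iSup_of_directed _ hdir).mp hm
    exact ⟨n, fun r hr => (Submodule.mem_torsionBySet_iff _ _).mp hn ⟨r, hr⟩⟩
  -- M is minimax
  have hminS : minimaxClass (ModuleCat.of R (torsionBySet R M (a : Set R))) := by
    haveI : Module.Finite R (ModuleCat.of R (torsionBySet R M (a : Set R))) := hsoc'
    refine ⟨⊤, Module.Finite.equiv (Submodule.topEquiv).symm, ?_⟩
    have : Subsingleton
        ((torsionBySet R (↑M : Type u) (a : Set R)) ⧸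
          (⊤ : Submodule R (torsionBySet R (↑M : Type u) (a : Set R)))) :=
      Submodule.Quotient.subsingleton_iff.mpr rfl
    infer_instance
  obtain ⟨N, hNfin, hQart⟩ := hmm M hG hminS
  haveI := hNfin
  haveI := hQart
  obtain ⟨s, hs⟩ := (IsNoetherian.noetherian a : a.FG)
  set X := torsionBySet R ((↑M : Type u) ⧸ N) (a : Set R) with hXdef
  set N₁ := Submodule.comap N.mkQ X with hN₁def
  have hmemN : ∀ (x : N₁) (r : R), r ∈ a → r • (x : (↑M : Type u)) ∈ N := by
    intro x r hr
    have hx := (Submodule.mem_torsionBySet_iff _ _).mp x.2 ⟨r, hr⟩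
    rwa [← map_smul, Submodule.mkQ_apply, Submodule.Quotient.mk_eq_zero] at hx
  let f : N₁ →ₗ[R] ((↑(s : Finset R) : Set R) → N) :=
    { toFun := fun x i => ⟨(i : R) • (x : (↑M : Type u)),
        hmemN x i (hs ▸ Ideal.subset_span i.2)⟩
      map_add' := by intro x y; funext i; ext; simp [smul_add]
      map_smul' := by
        intro c x; funext i; ext
        show (i : R) • (c • (x : (↑M : Type u))) = c • ((i : R) • (x : (↑M : Type u)))
        rw [smul_comm] }
  have hker : IsNoetherian R (LinearMap.ker f) := by
    haveI : IsNoetherian R (torsionBySet R (↑M : Type u) (a : Set R)) :=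
      isNoetherian_of_isNoetherianRing_of_finite R _
    refine isNoetherian_of_injective (LinearMap.codRestrict
      (torsionBySet R (↑M : Type u) (a : Set R))
      (N₁.subtype ∘ₗ (LinearMap.ker f).subtype) ?_) ?_
    · intro x
      rw [Submodule.mem_torsionBySet_iff]
      rintro ⟨r, hr⟩
      have hgen : ∀ t ∈ (↑(s : Finset R) : Set R),
          t • (((x : N₁) : (↑M : Type u))) = 0 := by
        intro t ht
        have h0 : f (x : N₁) = 0 := LinearMap.mem_ker.mp x.2
        exact congrArg Subtype.val (congrFun h0 ⟨t, ht⟩)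
      have hr' : r ∈ Submodule.span R (↑(s : Finset R) : Set R) := by rw [hs]; exact hr
      refine Submodule.span_induction (p := fun t _ => t • (((x : N₁) : (↑M : Type u))) = 0)
        (fun t ht => hgen t ht) (zero_smul R _) ?_ ?_ hr'
      · intro u v _ _ hu hv
        rw [add_smul, hu, hv, add_zero]
      · intro c u _ hu
        rw [smul_eq_mul, mul_smul, hu, smul_zero]
    · intro x y h
      have h2 := congrArg Subtype.val h
      simp only [LinearMap.codRestrict_apply, LinearMap.coe_comp, Function.comp_apply,
        Submodule.coe_subtype] at h2
      exact Subtype.ext (Subtype.ext h2)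
  have hN₁ : IsNoetherian R N₁ := by
    haveI : IsNoetherian R N := isNoetherian_of_isNoetherianRing_of_finite R _
    haveI : IsNoetherian R (LinearMap.range f) := inferInstance
    exact (isNoetherian_iff_submodule_quotient (LinearMap.ker f)).mpr
      ⟨hker, isNoetherian_of_linearEquiv f.quotKerEquivRange.symm⟩
  have hXfin : Module.Finite R X := by
    haveI := hN₁
    haveI : Module.Finite R N₁ := Module.finite_def.mpr (IsNoetherian.noetherian ⊤)
    refine Module.Finite.of_surjective
      (LinearMap.codRestrict X (N.mkQ ∘ₗ N₁.subtype) (fun x => x.2)) ?_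
    rintro ⟨y, hy⟩
    obtain ⟨m, rfl⟩ := N.mkQ_surjective y
    exact ⟨⟨m, hy⟩, rfl⟩
  have hflX : finiteLengthClass (ModuleCat.of R X) := by
    haveI : Module.Finite R (ModuleCat.of R X) := hXfin
    haveI : IsArtinian R (ModuleCat.of R X) := inferInstanceAs (IsArtinian R X)
    exact ⟨isNoetherian_of_isNoetherianRing_of_finite R _, inferInstance⟩
  have hGQ : torsionGamma a ((↑M : Type u) ⧸ N) = ⊤ := by
    rw [eq_top_iff]
    rintro y -
    obtain ⟨m, rfl⟩ := N.mkQ_surjective y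
    obtain ⟨n, hn⟩ := hpow m
    refine Submodule.mem_iSup_of_mem n ?_
    rw [Submodule.mem_torsionBySet_iff]
    rintro ⟨r, hr⟩
    show r • N.mkQ m = 0
    rw [← map_smul, hn r hr, map_zero]
  have hQfl : finiteLengthClass (ModuleCat.of R ((↑M : Type u) ⧸ N)) :=
    hfl (ModuleCat.of R ((↑M : Type u) ⧸ N)) hGQ hflX
  haveI : IsNoetherian R N := isNoetherian_of_isNoetherianRing_of_finite R _
  have hMnoe : IsNoetherian R (↑M : Type u) :=
    (isNoetherian_iff_submodule_quotient N).mpr ⟨inferInstance, hQfl.1⟩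
  exact Module.finite_def.mpr (IsNoetherian.noetherian ⊤)
end

section
/- Let R be a commutative noetherian ring, let 𝔞 be an ideal of R, let 𝒮 be a Serre subcategory of R-modules, and let 𝒮_1, 𝒮_2 be classes of R-modules. If 𝒮 satisfies the C_𝔞 condition on every module in 𝒮_1 and on every module in 𝒮_2, then 𝒮 satisfies the C_𝔞 condition on every module in the extension class ⟨𝒮_1, 𝒮_2⟩. -/
universe u

open Submodule

variable {R : Type u} [CommRing R]

/-- The extension class `⟨S₁, S₂⟩`: modules `M` possessing a submodule `N ∈ S₁`
with `M/N ∈ S₂`. -/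
def extClass (S₁ S₂ : ModuleCat.{u} R → Prop) (M : ModuleCat.{u} R) : Prop :=
  ∃ N : Submodule R M, S₁ (ModuleCat.of R N) ∧ S₂ (ModuleCat.of R (M ⧸ N))

section Helpers

variable {S : ModuleCat.{u} R → Prop}

lemma serre_ofInj (hS : IsSerreClass S) {A : Type u} [AddCommGroup A] [Module R A]
    (B : ModuleCat.{u} R) (f : A →ₗ[R] B) (hf : Function.Injective f) (hB : S B) :
    S (ModuleCat.of R A) :=
  hS.iso (M := ModuleCat.of R (LinearMap.range f)) (N := ModuleCat.of R A)
    (LinearEquiv.ofInjective f hf).symm (hS.subobj B (LinearMap.range f) hB)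

lemma serre_ofSurj (hS : IsSerreClass S) {A : Type u} [AddCommGroup A] [Module R A]
    (B : ModuleCat.{u} R) (f : B →ₗ[R] A) (hf : Function.Surjective f) (hB : S B) :
    S (ModuleCat.of R A) :=
  hS.iso (M := ModuleCat.of R (B ⧸ LinearMap.ker f)) (N := ModuleCat.of R A)
    (LinearMap.quotKerEquivOfSurjective f hf) (hS.quot B (LinearMap.ker f) hB)

lemma serre_ext (hS : IsSerreClass S) (M : ModuleCat.{u} R) {A : Type u}
    [AddCommGroup A] [Module R A] (f : M →ₗ[R] A)
    (hk : S (ModuleCat.of R (LinearMap.ker f))) (hA : S (ModuleCat.of R A)) : S M :=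
  hS.extension M (LinearMap.ker f) hk <|
    serre_ofInj hS (ModuleCat.of R A)
      ((LinearMap.range f).subtype ∘ₗ (LinearMap.quotKerEquivRange f).toLinearMap)
      ((Submodule.injective_subtype _).comp (LinearEquiv.injective _)) hA

lemma serre_pi_s13 (hS : IsSerreClass S) {A : Type u} [AddCommGroup A] [Module R A]
    (hA : S (ModuleCat.of R A)) : ∀ n : ℕ, S (ModuleCat.of R (Fin n → A))
  | 0 => hS.zero _ inferInstance
  | n + 1 => by
    refine serre_ext hS (ModuleCat.of R (Fin (n + 1) → A))
      (LinearMap.funLeft R A Fin.succ) ?_ (serre_pi_s13 hS hA n)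
    refine serre_ofInj hS (ModuleCat.of R A)
      ((LinearMap.proj (0 : Fin (n + 1))) ∘ₗ
        (LinearMap.ker (LinearMap.funLeft R A Fin.succ)).subtype) ?_ hA
    intro g h hgh
    simp only [LinearMap.comp_apply, LinearMap.proj_apply, Submodule.coe_subtype] at hgh
    apply Subtype.ext
    funext i
    induction i using Fin.cases with
    | zero => exact hgh
    | succ j =>
      have hg : g.1 j.succ = 0 := congrFun (LinearMap.mem_ker.mp g.2) j
      have hh : h.1 j.succ = 0 := congrFun (LinearMap.mem_ker.mp h.2) j
      rw [hg, hh]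

lemma mem_torsionGamma {a : Ideal R} {M : Type u} [AddCommGroup M] [Module R M] {m : M} :
    m ∈ torsionGamma a M ↔ ∃ n : ℕ, ∀ x ∈ a ^ n, x • m = 0 := by
  rw [torsionGamma, Submodule.mem_iSup_of_directed]
  · constructor
    · rintro ⟨n, hn⟩
      exact ⟨n, fun x hx => (Submodule.mem_torsionBySet_iff _ _).mp hn ⟨x, hx⟩⟩
    · rintro ⟨n, hn⟩
      exact ⟨n, (Submodule.mem_torsionBySet_iff _ _).mpr fun x => hn x x.2⟩
  · intro i j
    refine ⟨max i j, ?_, ?_⟩ <;>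
      exact Submodule.torsionBySet_le_torsionBySet_of_subset
        (Ideal.pow_le_pow_right (by omega))

lemma torsionGamma_eq_top {a : Ideal R} {M : Type u} [AddCommGroup M] [Module R M] :
    torsionGamma a M = ⊤ ↔ ∀ m : M, ∃ n : ℕ, ∀ x ∈ a ^ n, x • m = 0 := by
  rw [eq_top_iff']
  exact forall_congr' fun m => mem_torsionGamma

end Helpers

/-- If a Serre subcategory `S` satisfies the `C_a` condition on every module in `S₁` and
on every module in `S₂`, then it satisfies `C_a` on every module in `⟨S₁, S₂⟩`. -/
theorem stmt13 [IsNoetherianRing R] (a : Ideal R)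
    (S S₁ S₂ : ModuleCat.{u} R → Prop)
    (hS : IsSerreClass S)
    (h₁ : ∀ M : ModuleCat.{u} R, S₁ M → CCondOn S a M)
    (h₂ : ∀ M : ModuleCat.{u} R, S₂ M → CCondOn S a M) :
    ∀ M : ModuleCat.{u} R, extClass S₁ S₂ M → CCondOn S a M := by
  rintro M ⟨N, hN₁, hN₂⟩ hM hT
  rw [torsionGamma_eq_top] at hM
  set T : Submodule R M := Submodule.torsionBySet R M (a : Set R) with hTdef
  -- `N` is in `S`
  have hNtors : torsionGamma a (ModuleCat.of R N) = ⊤ := by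
    rw [torsionGamma_eq_top]
    intro m
    obtain ⟨n, hn⟩ := hM (show ↥N from m).1
    exact ⟨n, fun x hx => Subtype.ext (hn x hx)⟩
  have hNtor_in_S :
      S (ModuleCat.of R (Submodule.torsionBySet R (ModuleCat.of R N) (a : Set R))) := by
    refine serre_ofInj hS (ModuleCat.of R T)
      (LinearMap.codRestrict T (N.subtype ∘ₗ (Submodule.torsionBySet R N (a : Set R)).subtype)
        fun c => ?_) (fun c d hcd => ?_) hT
    · exact (Submodule.mem_torsionBySet_iff _ _).mpr fun x => by
        have := (Submodule.mem_torsionBySet_iff _ _).mp c.2 x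
        simpa only [LinearMap.comp_apply, Submodule.coe_subtype, map_smul, map_zero] using congrArg (N.subtype) this
    · have h' := congrArg Subtype.val hcd
      simp only [LinearMap.codRestrict_apply, LinearMap.comp_apply,
        Submodule.coe_subtype] at h'
      exact Subtype.ext (Subtype.ext h')
  have hNS : S (ModuleCat.of R N) := h₁ _ hN₁ hNtors hNtor_in_S
  -- the submodule `K` of `M`, preimage of `(0 :_{M/N} a)`
  set P : Submodule R (M ⧸ N) := Submodule.torsionBySet R (M ⧸ N) (a : Set R) with hPdef
  set K : Submodule R M := P.comap N.mkQ with hKdef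
  obtain ⟨n, x, hx⟩ : ∃ (n : ℕ) (x : Fin n → R), Ideal.span (Set.range x) = a := by
    obtain ⟨n, x, hx⟩ := Submodule.fg_iff_exists_fin_generating_family.mp
      (IsNoetherian.noetherian a)
    exact ⟨n, x, hx⟩
  have hxa : ∀ i, x i ∈ a := fun i => hx ▸ Ideal.subset_span ⟨i, rfl⟩
  -- the map `K → N^n`, `m ↦ (xᵢ • m)`
  have hxi : ∀ (i : Fin n) (m : K), x i • (m : M) ∈ N := by
    intro i m
    have hm : (N.mkQ (m : M)) ∈ P := m.2
    have := (Submodule.mem_torsionBySet_iff _ _).mp hm ⟨x i, hxa i⟩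
    rw [← (Submodule.Quotient.mk_eq_zero N)]
    simpa using this
  set g : K →ₗ[R] (Fin n → N) :=
    LinearMap.pi (fun i => LinearMap.codRestrict N (x i • K.subtype) (hxi i)) with hgdef
  -- the kernel of `g` lies in `T`
  have hker : ∀ c : LinearMap.ker g, ((c : K) : M) ∈ T := by
    rintro ⟨⟨m, hmK⟩, hmker⟩
    have hgen : ∀ i, x i • m = 0 := by
      intro i
      have := congrFun (LinearMap.mem_ker.mp hmker) i
      exact congrArg Subtype.val this
    have hann : ∀ y ∈ Ideal.span (Set.range x), y • m = 0 := by
      intro y hy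
      induction hy using Submodule.span_induction with
      | mem z hz => obtain ⟨i, rfl⟩ := hz; exact hgen i
      | zero => simp
      | add z w hz hw hz' hw' => simp [add_smul, hz', hw']
      | smul r z hz hz' => simp [mul_smul, hz']
    refine (Submodule.mem_torsionBySet_iff _ _).mpr fun y => ?_
    show (y : R) • m = 0
    exact hann y (by rw [hx]; exact y.2)
  have hkerS : S (ModuleCat.of R (LinearMap.ker g)) := by
    refine serre_ofInj hS (ModuleCat.of R T)
      (LinearMap.codRestrict T (K.subtype ∘ₗ (LinearMap.ker g).subtype) hker)
      (fun c d hcd => ?_) hT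
    have h' := congrArg Subtype.val hcd
    simp only [LinearMap.codRestrict_apply, LinearMap.comp_apply,
      Submodule.coe_subtype] at h'
    exact Subtype.ext (Subtype.ext h')
  have hKS : S (ModuleCat.of R K) :=
    serre_ext hS (ModuleCat.of R K) g hkerS (serre_pi_s13 hS hNS n)
  -- `(0 :_{M/N} a)` is in `S`
  have hPS : S (ModuleCat.of R P) := by
    refine serre_ofSurj hS (ModuleCat.of R K)
      (LinearMap.codRestrict P (N.mkQ ∘ₗ K.subtype) fun c => c.2) ?_ hKS
    intro p
    obtain ⟨z, hz⟩ := Submodule.mkQ_surjective N (p : M ⧸ N)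
    have hzK : z ∈ K := by
      show N.mkQ z ∈ P
      rw [hz]; exact p.2
    exact ⟨⟨z, hzK⟩, Subtype.ext hz⟩
  -- `M/N` is in `S`
  have hMNtors : torsionGamma a (ModuleCat.of R (M ⧸ N)) = ⊤ := by
    rw [torsionGamma_eq_top]
    intro m
    obtain ⟨z, rfl⟩ := Submodule.mkQ_surjective N m
    obtain ⟨k, hk⟩ := hM z
    exact ⟨k, fun y hy => by rw [← LinearMap.map_smul N.mkQ, hk y hy, map_zero]⟩
  have hMNS : S (ModuleCat.of R (M ⧸ N)) := h₂ _ hN₂ hMNtors hPS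
  exact hS.extension M N hNS hMNS
end

section
/- Let R be a commutative noetherian ring, let 𝔞 be an ideal of R, and let 𝒮 be a torsion subcategory of R-modules, i.e. a Serre subcategory that is moreover closed under arbitrary direct sums. Then 𝒮 satisfies the C_𝔞 condition. -/
universe u

open Submodule

variable {R : Type u} [CommRing R]

open DirectSum

lemma S_of_surjective {S : ModuleCat.{u} R → Prop} (hS : IsSerreClass S)
    {M N : ModuleCat.{u} R} (f : M →ₗ[R] N) (hf : Function.Surjective f) (hM : S M) : S N :=
  hS.iso (M := ModuleCat.of R (M ⧸ LinearMap.ker f))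
    (f.quotKerEquivOfSurjective hf) (hS.quot M (LinearMap.ker f) hM)

lemma S_of_injective {S : ModuleCat.{u} R → Prop} (hS : IsSerreClass S)
    {M N : ModuleCat.{u} R} (f : M →ₗ[R] N) (hf : Function.Injective f) (hN : S N) : S M :=
  hS.iso (M := ModuleCat.of R (LinearMap.range f))
    (LinearEquiv.ofInjective f hf).symm (hS.subobj N (LinearMap.range f) hN)

/-- A torsion subcategory (a Serre subcategory closed under arbitrary direct sums)
satisfies the `C_a` condition for every ideal `a`. -/
theorem stmt16 [IsNoetherianRing R] (a : Ideal R)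
    (S : ModuleCat.{u} R → Prop)
    (hS : IsSerreClass S)
    (hsum : ∀ (I : Type u) (f : I → ModuleCat.{u} R),
      (∀ i, S (f i)) → S (ModuleCat.of R (⨁ i, f i))) :
    CCond S a := by
  intro M hΓ h0
  obtain ⟨s, hs⟩ : a.FG := IsNoetherian.noetherian a
  set N : ℕ → Submodule R M := fun n => torsionBySet R M ((a ^ n : Ideal R) : Set R) with hNdef
  -- each N n is in S
  have hN : ∀ n, S (ModuleCat.of R (N n)) := by
    intro n
    induction n with
    | zero =>
      apply hS.zero
      constructor
      rintro ⟨x, hx⟩ ⟨y, hy⟩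
      have hx0 : x = 0 := by
        have := (mem_torsionBySet_iff _ _).mp hx ⟨1, by simp [Ideal.one_eq_top]⟩
        simpa using this
      have hy0 : y = 0 := by
        have := (mem_torsionBySet_iff _ _).mp hy ⟨1, by simp [Ideal.one_eq_top]⟩
        simpa using this
      simp [hx0, hy0]
    | succ n ih =>
      have hkey : ∀ (x : ↥s) (m : ↑M), m ∈ N (n + 1) → (x : R) • m ∈ N n := by
        rintro ⟨x, hxs⟩ m hm
        rw [hNdef, mem_torsionBySet_iff]
        rintro ⟨r, hr⟩
        have hxa : x ∈ a := hs ▸ Ideal.subset_span hxs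
        have hmem : r * x ∈ a ^ (n + 1) := by
          rw [pow_succ]; exact Ideal.mul_mem_mul hr hxa
        have := (mem_torsionBySet_iff _ _).mp hm ⟨r * x, hmem⟩
        rw [← mul_smul]; exact this
      let ψ : (N (n + 1) : Submodule R M) →ₗ[R] (↥s → ↥(N n)) :=
        { toFun := fun m i => ⟨(i : R) • (m : ↑M), hkey i m m.2⟩
          map_add' := fun m m' => funext fun i => Subtype.ext (smul_add _ _ _)
          map_smul' := fun r m => funext fun i => Subtype.ext (smul_comm _ _ _) }
      have hker : S (ModuleCat.of R (LinearMap.ker ψ)) := by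
        have hmem : ∀ k : LinearMap.ker ψ,
            ((k : ↥(N (n + 1))) : ↑M) ∈ torsionBySet R ↑M (a : Set R) := by
          intro k
          rw [← hs, ← torsionBySet_eq_torsionBySet_span, mem_torsionBySet_iff]
          rintro ⟨x, hxs⟩
          have h := k.2
          rw [LinearMap.mem_ker] at h
          have := congrFun h ⟨x, hxs⟩
          exact congrArg Subtype.val this
        let g : ↥(LinearMap.ker ψ) →ₗ[R] ↥(torsionBySet R ↑M (a : Set R)) :=
          { toFun := fun k => ⟨((k : ↥(N (n + 1))) : ↑M), hmem k⟩
            map_add' := fun k k' => rfl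
            map_smul' := fun r k => rfl }
        have hg : Function.Injective g := by
          intro k k' h
          have h2 : ((k : ↥(N (n + 1))) : ↑M) = ((k' : ↥(N (n + 1))) : ↑M) :=
            congrArg (fun z : ↥(torsionBySet R ↑M (a : Set R)) => z.val) h
          exact Subtype.ext (Subtype.ext h2)
        exact S_of_injective hS (N := ModuleCat.of R (torsionBySet R ↑M (a : Set R)))
          (M := ModuleCat.of R (LinearMap.ker ψ)) g hg h0
      have hpi : S (ModuleCat.of R (↥s → ↥(N n))) := by
        have := hsum ↥s (fun _ => ModuleCat.of R (N n)) (fun _ => ih)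
        exact hS.iso (DirectSum.linearEquivFunOnFintype R ↥s (fun _ : ↥s => ↥(N n))) this
      have hquot : S (ModuleCat.of R (↥(N (n + 1)) ⧸ LinearMap.ker ψ)) :=
        hS.iso (M := ModuleCat.of R (LinearMap.range ψ))
          (ψ.quotKerEquivRange).symm
          (hS.subobj (ModuleCat.of R (↥s → ↥(N n))) (LinearMap.range ψ) hpi)
      exact hS.extension (ModuleCat.of R (N (n + 1))) (LinearMap.ker ψ) hker hquot
  -- M is a quotient of ⨁ n, N n
  let φ : (⨁ i : ULift.{u} ℕ, (N i.down : Submodule R M)) →ₗ[R] M :=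
    DirectSum.toModule R (ULift.{u} ℕ) M (fun i => (N i.down).subtype)
  have hrange : ∀ n, N n ≤ LinearMap.range φ := by
    intro n m hm
    exact ⟨DirectSum.lof R (ULift.{u} ℕ) _ ⟨n⟩ ⟨m, hm⟩, by
      simp [φ, DirectSum.toModule_lof]⟩
  have hsurj : Function.Surjective φ := by
    rw [← LinearMap.range_eq_top, ← top_le_iff]
    have : torsionGamma a M ≤ LinearMap.range φ := iSup_le hrange
    rwa [hΓ] at this
  exact S_of_surjective hS (M := ModuleCat.of R (⨁ i : ULift.{u} ℕ, (N i.down : Submodule R M)))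
    φ hsurj (hsum (ULift.{u} ℕ) (fun i => ModuleCat.of R (N i.down)) (fun i => hN i.down))
end
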